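/- arXiv:1801.09516 — 5 statements merged into one kernel-verified Lean document; each statement's English description precedes it below -/
import Mathlib

section
/- If w = a_1a_2⋯a_n is a prenecklace over the alphabet {0,…,k−1} and b > a_n, then the word a_1a_2⋯a_{n−1}b is a Lyndon word. -/
private theorem lex_append {x : List ℕ} : ∀ {y : List ℕ}, x.length = y.length →
    List.Lex (· < ·) x y → ∀ s t : List ℕ, List.Lex (· < ·) (x ++ s) (y ++ t) := by
  induction x with
  | nil => intro y hlen hxy; cases y with
    | nil => exact absurd hxy List.not_lex_nil
    | cons b y' => simp at hlen
  | cons a x' ih =>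
    intro y hlen hxy
    cases y with
    | nil => exact absurd hxy List.not_lex_nil
    | cons b y' =>
      intro s t
      cases hxy with
      | rel hab => exact List.Lex.rel hab
      | cons hxy' => exact List.Lex.cons (ih (by simpa using hlen) hxy' s t)

private theorem lex_take : ∀ (m : ℕ) {x y : List ℕ}, List.Lex (· < ·) x y →
    List.Lex (· < ·) (x.take m) (y.take m) ∨ x.take m = y.take m := by
  intro m
  induction m with
  | zero => intro x y _; right; simp
  | succ m ih =>
    intro x y hxy
    cases x with
    | nil =>
      cases y with
      | nil => exact absurd hxy List.not_lex_nil
      | cons b y' => left; simp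
    | cons a x' =>
      cases y with
      | nil => exact absurd hxy List.not_lex_nil
      | cons b y' =>
        cases hxy with
        | rel hab => left; exact List.Lex.rel hab
        | cons hxy' =>
          rcases ih hxy' with h | h
          · left; exact List.Lex.cons h
          · right; simp [h]

private theorem take_le_take (m : ℕ) {x y : List ℕ} (h : x ≤ y) : x.take m ≤ y.take m := by
  rcases lt_or_eq_of_le h with h | rfl
  · rcases lex_take m (show List.Lex (· < ·) x y from h) with h | h
    · exact le_of_lt h
    · exact le_of_eq h
  · rfl

private theorem lex_lastReplace {a b : ℕ} (hab : a < b) :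
    ∀ (z : List ℕ) {x : List ℕ}, x.length = z.length + 1 →
    (List.Lex (· < ·) x (z ++ [a]) ∨ x = z ++ [a]) → List.Lex (· < ·) x (z ++ [b]) := by
  intro z
  induction z with
  | nil =>
    intro x hlen hx
    match x, hlen with
    | [c], _ =>
      rcases hx with h | h
      · exact List.Lex.rel (lt_trans ((List.lex_singleton_iff c a).mp h) hab)
      · simp at h; subst h; exact List.Lex.rel hab
  | cons d z' ih =>
    intro x hlen hx
    match x, hlen with
    | c :: x', hlen =>
      rcases hx with h | h
      · cases h with
        | rel hcd => exact List.Lex.rel hcd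
        | cons h' => exact List.Lex.cons (ih (by simpa using hlen) (Or.inl h'))
      · simp at h
        obtain ⟨rfl, rfl⟩ := h
        exact List.Lex.cons (ih (by simpa using hlen) (Or.inr rfl))


/-- `w` is a necklace: lexicographically ≤ all of its rotations. -/
def IsNecklace (w : List ℕ) : Prop := ∀ i : ℕ, w ≤ w.rotate i

/-- `w` is a Lyndon word: nonempty and strictly smaller than all nontrivial rotations. -/
def IsLyndon (w : List ℕ) : Prop :=
  w ≠ [] ∧ ∀ i : ℕ, 0 < i → i < w.length → w < w.rotate i

/-- `w` is a prenecklace over the alphabet `{0,…,k-1}`. -/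
def IsPrenecklace (k : ℕ) (w : List ℕ) : Prop :=
  ∃ v : List ℕ, w <+: v ∧ (∀ a ∈ v, a < k) ∧ IsNecklace v

/-- Length of the longest prefix of `w` that is a Lyndon word. -/
noncomputable def lyn (w : List ℕ) : ℕ :=
  sSup {p | p ≤ w.length ∧ IsLyndon (w.take p)}

/-- Number of binary necklaces of length `n` and density `d`. -/
noncomputable def N (n d : ℕ) : ℕ :=
  {w : List ℕ | w.length = n ∧ (∀ a ∈ w, a < 2) ∧ w.count 1 = d ∧ IsNecklace w}.ncard

/-- Number of binary Lyndon words of length `n` and density `d`. -/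
noncomputable def L (n d : ℕ) : ℕ :=
  {w : List ℕ | w.length = n ∧ (∀ a ∈ w, a < 2) ∧ w.count 1 = d ∧ IsLyndon w}.ncard

/-- Number of necklaces over `{0,…,k-1}` with content `c`. -/
noncomputable def Nk (k : ℕ) (c : Fin k → ℕ) : ℕ :=
  {w : List ℕ | (∀ a ∈ w, a < k) ∧ (∀ i : Fin k, w.count i.val = c i) ∧ IsNecklace w}.ncard

/-- Number of Lyndon words over `{0,…,k-1}` with content `c`. -/
noncomputable def Lk (k : ℕ) (c : Fin k → ℕ) : ℕ :=
  {w : List ℕ | (∀ a ∈ w, a < k) ∧ (∀ i : Fin k, w.count i.val = c i) ∧ IsLyndon w}.ncard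

/-- Replacing the last letter of a prenecklace by a larger letter gives a Lyndon word. -/
theorem prenecklace_lastReplace_lyndon (k : ℕ) (w : List ℕ) (hw : IsPrenecklace k w)
    (hne : w ≠ []) (b : ℕ) (hb : b < k) (h : w.getLast hne < b) :
    IsLyndon (w.dropLast ++ [b]) := by
  obtain ⟨v, ⟨r, rfl⟩, _, hneck⟩ := hw
  set n := w.length with hn
  have hn1 : 1 ≤ n := List.length_pos_iff.mpr hne
  refine ⟨by simp, ?_⟩
  intro i hi0 hin
  have hulen : (w.dropLast ++ [b]).length = n := by
    simp [List.length_dropLast, Nat.sub_add_cancel hn1]; omega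
  rw [hulen] at hin
  have hdl : w.dropLast.length = n - 1 := by simp; omega
  have hile : i ≤ n - 1 := Nat.le_sub_one_of_lt hin
  -- Step A : take (n-i) w ≤ drop i w
  have hA : w.take (n - i) ≤ w.drop i := by
    have h1 := take_le_take (n - i) (hneck i)
    have e1 : ((w ++ r).take (n - i)) = w.take (n - i) :=
      List.take_append_of_le_length (Nat.sub_le _ _)
    have e2 : ((w ++ r).rotate i).take (n - i) = w.drop i := by
      rw [List.rotate_eq_drop_append_take (by first | (simp [hn]; omega) | simp [hn] | omega),
        List.take_append_of_le_length (by first | (simp [hn]; omega) | simp [hn] | omega)]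
      rw [List.drop_append_of_le_length (by omega),
        List.take_append_of_le_length (by first | (simp [hn]; omega) | simp [hn] | omega),
        List.take_of_length_le (by simp [hn])]
    rwa [e1, e2] at h1
  -- Step B : drop i w = drop i (dropLast w) ++ [getLast]
  have hB : w.drop i = w.dropLast.drop i ++ [w.getLast hne] := by
    conv_lhs => rw [← List.dropLast_append_getLast hne]
    rw [List.drop_append_of_le_length (by omega)]
  -- Step C
  have hC : List.Lex (· < ·) (w.take (n - i)) (w.dropLast.drop i ++ [b]) := by
    refine lex_lastReplace h (w.dropLast.drop i) ?_ ?_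
    · simp; omega
    · rw [← hB]
      rcases lt_or_eq_of_le hA with h' | h'
      · exact Or.inl h'
      · exact Or.inr h'
  -- Step D
  have hut : (w.dropLast ++ [b]).take (n - i) = w.take (n - i) := by
    rw [List.take_append_of_le_length (by omega), List.dropLast_eq_take,
      List.take_take]
    congr 1; omega
  have hud : (w.dropLast ++ [b]).drop i = w.dropLast.drop i ++ [b] := by
    rw [List.drop_append_of_le_length (by omega)]
  show List.Lex (· < ·) _ _
  rw [List.rotate_eq_drop_append_take (by omega), hud]
  conv_lhs => rw [← List.take_append_drop (n - i) (w.dropLast ++ [b])]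
  rw [hut]
  exact lex_append (by rw [List.length_take, List.length_append, List.length_drop]; simp; omega)
    hC _ _
end

section
/- If w is a necklace over {0,…,k−1} with first letter a_1 and b is a letter with b > a_1, then the concatenation wb is a Lyndon word. -/
private lemma lex_app {x y : List ℕ} (hlen : x.length = y.length)
    (h : List.Lex (·<·) x y) : ∀ p q : List ℕ, List.Lex (·<·) (x ++ p) (y ++ q) := by
  induction h with
  | nil => simp at hlen
  | rel h => exact fun p q => List.Lex.rel h
  | cons h ih => exact fun p q => List.Lex.cons (ih (by simpa using hlen) p q)

private lemma lex_cancel {p x y : List ℕ} (h : List.Lex (·<·) (p ++ x) (p ++ y)) :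
    List.Lex (·<·) x y := by
  induction p with
  | nil => exact h
  | cons a p ih =>
    cases h with
    | rel h => exact absurd h (lt_irrefl a)
    | cons h => exact ih h

private lemma le_of_app_le {x y p q : List ℕ} (hlen : x.length = y.length)
    (h : x ++ p ≤ y ++ q) : x ≤ y := by
  by_contra hc
  push_neg at hc
  exact absurd h (not_le.mpr (lex_app hlen.symm hc q p))

private lemma le_cancel {p x y : List ℕ} (h : p ++ x ≤ p ++ y) : x ≤ y := by
  rcases lt_or_eq_of_le h with h' | h'
  · exact le_of_lt (lex_cancel h')
  · exact le_of_eq (List.append_cancel_left h')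

private lemma head_le_head {x y : List ℕ} (hx : x ≠ []) (hy : y ≠ []) (h : x ≤ y) :
    x.head hx ≤ y.head hy := by
  match x, y with
  | a :: x', c :: y' =>
    rcases lt_or_eq_of_le h with h' | h'
    · exact List.head_le_of_lt h'
    · simp only [List.cons.injEq] at h'
      simp [h'.1]

/-- Appending a letter larger than the first letter of a necklace gives a Lyndon word. -/
theorem necklace_append_lyndon (k : ℕ) (w : List ℕ) (halph : ∀ a ∈ w, a < k)
    (hw : IsNecklace w) (hne : w ≠ []) (b : ℕ) (hb : b < k) (h : w.head hne < b) :
    IsLyndon (w ++ [b]) := by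
  refine ⟨by simp, fun i hi hilen => ?_⟩
  have hwlen : 0 < w.length := List.length_pos_iff.mpr hne
  have hile : i ≤ w.length := by simpa [Nat.lt_succ_iff] using hilen
  rw [List.rotate_eq_drop_append_take (by simp; omega),
    List.drop_append_of_le_length hile, List.take_append_of_le_length hile]
  have hwr : w ≤ w.drop i ++ w.take i := by
    have := hw i
    rwa [List.rotate_eq_drop_append_take hile] at this
  have h1 : w.take (w.length - i) ≤ w.drop i := by
    have h0 : w.take (w.length - i) ++ w.drop (w.length - i) ≤ w.drop i ++ w.take i := by
      rwa [List.take_append_drop]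
    exact le_of_app_le (by simp <;> omega) h0
  rcases lt_or_eq_of_le h1 with h2 | h2
  · have h3 : List.Lex (·<·)
        (w.take (w.length - i) ++ (w.drop (w.length - i) ++ [b]))
        (w.drop i ++ ([b] ++ w.take i)) :=
      lex_app (by simp <;> omega) h2 _ _
    rw [← List.append_assoc, List.take_append_drop, ← List.append_assoc] at h3
    exact h3
  · have hs : w.drop (w.length - i) ≤ w.take i := by
      have h0 : w.take (w.length - i) ++ w.drop (w.length - i)
          ≤ w.take (w.length - i) ++ w.take i := by
        rw [List.take_append_drop, h2]
        exact hwr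
      exact le_cancel h0
    have hsne : w.drop (w.length - i) ≠ [] := by
      refine List.length_pos_iff.mp ?_
      simp; omega
    have htne : w.take i ≠ [] := by
      refine List.length_pos_iff.mp ?_
      simp; omega
    have hhead : (w.drop (w.length - i)).head hsne < b := by
      have h3 := head_le_head hsne htne hs
      rw [List.head_take] at h3
      exact lt_of_le_of_lt h3 h
    have key : List.Lex (·<·) (w.drop (w.length - i) ++ [b]) ([b] ++ w.take i) := by
      rw [← List.cons_head_tail hsne]
      exact List.Lex.rel hhead
    have h4 := List.Lex.append_left _ key (w.take (w.length - i))
    rw [← List.append_assoc, List.take_append_drop, h2, ← List.append_assoc] at h4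
    exact h4
end

section
/- If w = a_1a_2⋯a_n is a prenecklace and p = lyn(w) < n, then w = (a_1a_2⋯a_p)^j a_1a_2⋯a_i for some integers j ≥ 1 and 1 ≤ i ≤ p; that is, w is a power of its longest Lyndon prefix followed by a (possibly full) prefix of that Lyndon prefix. -/
set_option maxHeartbeats 1000000

open List

/-! ### Lexicographic order toolkit -/

private lemma lt_append_cons (s : List ℕ) {a c : ℕ} (t1 t2 : List ℕ) (h : a < c) :
    s ++ a :: t1 < s ++ c :: t2 := by
  show List.Lex (· < ·) _ _
  induction s with
  | nil => exact List.Lex.rel h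
  | cons x s ih => exact List.Lex.cons ih

private lemma lt_of_mismatch {x y : List ℕ} {d : ℕ} (hx : d < x.length) (hy : d < y.length)
    (htake : x.take d = y.take d) (hd : x[d] < y[d]) : x < y := by
  have hxeq : x = x.take d ++ x[d] :: x.drop (d + 1) := by
    conv_lhs => rw [← List.take_append_drop d x]
    rw [List.drop_eq_getElem_cons hx]
  have hyeq : y = y.take d ++ y[d] :: y.drop (d + 1) := by
    conv_lhs => rw [← List.take_append_drop d y]
    rw [List.drop_eq_getElem_cons hy]
  rw [hxeq, hyeq, htake]
  exact lt_append_cons _ _ _ hd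

private lemma getElem_eq_of_take_eq {x y : List ℕ} {d s : ℕ} (h : x.take d = y.take d)
    (hs : s < d) (hx : s < x.length) (hy : s < y.length) : x[s] = y[s] := by
  have h2 : (x.take d)[s]? = (y.take d)[s]? := by rw [h]
  rw [List.getElem?_take, List.getElem?_take, if_pos hs, if_pos hs,
    List.getElem?_eq_getElem hx, List.getElem?_eq_getElem hy] at h2
  exact Option.some_inj.mp h2

private lemma lex_trichotomy : ∀ (x y : List ℕ), x <+: y ∨ y <+: x ∨
    ∃ d, ∃ (hx : d < x.length) (hy : d < y.length), x.take d = y.take d ∧ x[d] ≠ y[d]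
  | [], y => Or.inl (nil_prefix)
  | a :: x, [] => Or.inr (Or.inl (nil_prefix))
  | a :: x, b :: y => by
    by_cases hab : a = b
    · subst hab
      rcases lex_trichotomy x y with h | h | ⟨d, hx, hy, h3, h4⟩
      · obtain ⟨t, rfl⟩ := h
        exact Or.inl ⟨t, rfl⟩
      · obtain ⟨t, rfl⟩ := h
        exact Or.inr (Or.inl ⟨t, rfl⟩)
      · refine Or.inr (Or.inr ⟨d + 1, by simpa using hx, by simpa using hy, ?_, ?_⟩)
        · simpa [List.take_succ_cons] using h3
        · simpa using h4
    · exact Or.inr (Or.inr ⟨0, by simp, by simp, by simp, by simpa using hab⟩)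

private lemma lt_of_append_lt (s : List ℕ) {z c : List ℕ} (h : s ++ z < s ++ c) : z < c := by
  induction s with
  | nil => exact h
  | cons x s ih =>
    apply ih
    have h' : List.Lex (· < ·) (x :: (s ++ z)) (x :: (s ++ c)) := h
    cases h' with
    | cons h'' => exact h''
    | rel h'' => exact absurd h'' (lt_irrefl x)

private lemma append_lt_append {z c : List ℕ} (hlen : z.length = c.length) (h : z < c)
    (s t : List ℕ) : z ++ s < c ++ t := by
  rcases lex_trichotomy z c with hp | hp | ⟨d, h1, h2, h3, h4⟩
  · exact absurd ((hp.eq_of_length hlen) ▸ h) (lt_irrefl c)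
  · exact absurd ((hp.eq_of_length hlen.symm) ▸ h) (lt_irrefl c)
  · have h5 := lt_trichotomy (z.get ⟨d, h1⟩) (c.get ⟨d, h2⟩)
    simp only [List.get_eq_getElem] at h5
    rcases h5 with h5 | h5 | h5
    · refine lt_of_mismatch (x := z ++ s) (y := c ++ t) (d := d)
        (by rw [List.length_append]; omega) (by rw [List.length_append]; omega) ?_ ?_
      · rw [List.take_append_of_le_length (le_of_lt h1),
          List.take_append_of_le_length (le_of_lt h2), h3]
      · rw [List.getElem_append_left h1, List.getElem_append_left h2]; exact h5
    · exact absurd h5 h4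
    · have : c < z := lt_of_mismatch h2 h1 h3.symm h5
      exact absurd h (lt_asymm this)

/-! ### getD helpers -/

private lemma getD_drop (l : List ℕ) (t s : ℕ) (h : t + s < l.length) :
    (l.drop t).getD s 0 = l.getD (t + s) 0 := by
  rw [List.getD_eq_getElem _ _ (by rw [List.length_drop]; omega),
    List.getElem_drop, List.getD_eq_getElem _ _ h]

private lemma getD_take (l : List ℕ) (t s : ℕ) (hs : s < t) (h : s < l.length) :
    (l.take t).getD s 0 = l.getD s 0 := by
  rw [List.getD_eq_getElem _ _ (by rw [List.length_take]; omega),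
    List.getElem_take, List.getD_eq_getElem _ _ h]

/-! ### mod arithmetic helpers -/

private lemma mod_arith2 {t s p : ℕ} (h : t % p + s < p) : (t + s) % p = t % p + s := by
  conv_lhs => rw [← Nat.div_add_mod t p]
  rw [Nat.add_assoc, Nat.mul_add_mod]
  exact Nat.mod_eq_of_lt h

private lemma mod_arith1 {t s p : ℕ} (h : t % p = 0) : (t + s) % p = s % p := by
  obtain ⟨a, rfl⟩ := Nat.dvd_of_mod_eq_zero h
  exact Nat.mul_add_mod p a s

private lemma mod_arith3 {m t p : ℕ} (ht : t ≤ m) (h : m - t + t % p < p) :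
    m % p = m - t + t % p := by
  conv_lhs => rw [show m = t + (m - t) by omega]
  rw [mod_arith2 (by omega)]
  omega

/-! ### Lyndon word facts -/

private lemma lyndon_mismatch {u : List ℕ} (hu : IsLyndon u) {e : ℕ} (he0 : 0 < e)
    (hep : e < u.length) :
    ∃ d, e + d < u.length ∧ u.take d = (u.drop e).take d ∧
      u.getD d 0 < u.getD (e + d) 0 := by
  have hrot : u < u.rotate e := hu.2 e he0 hep
  rw [List.rotate_eq_drop_append_take (le_of_lt hep)] at hrot
  rcases lex_trichotomy u (u.drop e) with hpf | hpf | ⟨d, h1, h2, h3, h4⟩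
  · exfalso
    have := hpf.length_le
    rw [List.length_drop] at this
    omega
  · -- border case : u.drop e is a prefix of u
    exfalso
    have hslen : (u.drop e).length = u.length - e := List.length_drop ..
    have hs : u.drop e = u.take (u.length - e) := by
      have h' := List.prefix_iff_eq_take.mp hpf
      rwa [hslen] at h'
    have h5 : u.take (u.length - e) ++ u.drop (u.length - e) <
        u.take (u.length - e) ++ u.take e := by
      calc u.take (u.length - e) ++ u.drop (u.length - e) = u := List.take_append_drop ..
        _ < u.drop e ++ u.take e := hrot
        _ = u.take (u.length - e) ++ u.take e := by rw [hs]
    have hzc : u.drop (u.length - e) < u.take e := lt_of_append_lt _ h5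
    have hrot2 : u < u.rotate (u.length - e) := hu.2 _ (by omega) (by omega)
    rw [List.rotate_eq_drop_append_take (by omega)] at hrot2
    have hueq : u = u.take e ++ u.take (u.length - e) := by
      conv_lhs => rw [← List.take_append_drop e u]
      rw [hs]
    have h6 : u.take e ++ u.take (u.length - e) <
        u.drop (u.length - e) ++ u.take (u.length - e) := by
      rw [← hueq]; exact hrot2
    have h7 : u.drop (u.length - e) ++ u.take (u.length - e) <
        u.take e ++ u.take (u.length - e) :=
      append_lt_append (by rw [List.length_drop, List.length_take]; omega) hzc _ _
    exact lt_irrefl _ (lt_trans h6 h7)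
  · -- mismatch case
    have h2' : e + d < u.length := by rw [List.length_drop] at h2; omega
    have hdd : (u.drop e)[d]'h2 = u[e + d]'h2' := List.getElem_drop ..
    have h5 := lt_trichotomy (u.get ⟨d, h1⟩) ((u.drop e).get ⟨d, h2⟩)
    simp only [List.get_eq_getElem] at h5
    rcases h5 with h5 | h5 | h5
    · refine ⟨d, h2', h3, ?_⟩
      rw [List.getD_eq_getElem _ _ h1, List.getD_eq_getElem _ _ h2', ← hdd]
      exact h5
    · exact absurd h5 h4
    · exfalso
      have hmis : u.drop e ++ u.take e < u := by
        refine lt_of_mismatch (d := d)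
          (by rw [List.length_append, List.length_drop, List.length_take]; omega) h1 ?_ ?_
        · rw [List.take_append_of_le_length (le_of_lt h2), h3]
        · rw [List.getElem_append_left h2]
          exact h5
      exact lt_irrefl _ (lt_trans hrot hmis)

private lemma periodic_rotate_mismatch {u y : List ℕ} (hu : IsLyndon u) (hp : 0 < u.length)
    (hper : ∀ j, j < y.length → y.getD j 0 = u.getD (j % u.length) 0)
    {t : ℕ} (ht0 : 0 < t) (htm : t ≤ y.length) (hym : u.length ≤ y.length) :
    ∃ d, d ≤ y.length - t ∧ y.take d = (y.drop t).take d ∧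
      ((t + d < y.length ∧ y.getD d 0 < y.getD (t + d) 0) ∨
       (d = y.length - t ∧ u.getD (d % u.length) 0 ≤ u.getD (y.length % u.length) 0)) := by
  set p := u.length with hpdef
  set m := y.length with hmdef
  by_cases he : t % p = 0
  · refine ⟨m - t, le_refl _, ?_, Or.inr ⟨rfl, ?_⟩⟩
    · rw [List.take_of_length_le (le_of_eq (List.length_drop : (y.drop t).length = y.length - t))]
      refine List.ext_getElem (by rw [List.length_take, List.length_drop]; omega) ?_
      intro s hs1 hs2
      rw [List.length_take] at hs1
      rw [List.length_drop] at hs2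
      rw [List.getElem_take, List.getElem_drop,
        ← List.getD_eq_getElem y 0 (show s < m by omega),
        ← List.getD_eq_getElem y 0 (show t + s < m by omega),
        hper s (by omega), hper (t + s) (by omega), mod_arith1 he]
    · rw [show (m - t) % p = m % p by
        conv_rhs => rw [show m = t + (m - t) by omega]
        rw [mod_arith1 he]]
  · have hep : t % p < p := Nat.mod_lt t hp
    obtain ⟨d0, h1, htk0, hlt0⟩ := lyndon_mismatch hu (show 0 < t % p by omega) hep
    have hFeq : ∀ s, s < d0 → u.getD s 0 = u.getD (t % p + s) 0 := by
      intro s hs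
      have h' := getElem_eq_of_take_eq htk0 hs (by omega)
        (by rw [List.length_drop]; omega)
      rw [List.getElem_drop] at h'
      rw [List.getD_eq_getElem _ _ (by omega : s < u.length),
        List.getD_eq_getElem _ _ (by omega : t % p + s < u.length)]
      exact h'
    have hych : ∀ s, s < m → s < p → y.getD s 0 = u.getD s 0 := by
      intro s hs hsp
      rw [hper s hs, Nat.mod_eq_of_lt hsp]
    by_cases hcase : d0 < m - t
    · refine ⟨d0, by omega, ?_, Or.inl ⟨by omega, ?_⟩⟩
      · have hlens : (y.take d0).length = ((y.drop t).take d0).length := by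
          rw [List.length_take, List.length_take, List.length_drop]; omega
        refine List.ext_getElem hlens ?_
        intro s hs1 hs2
        rw [List.length_take] at hs1
        rw [List.getElem_take, List.getElem_take, List.getElem_drop,
          ← List.getD_eq_getElem y 0 (show s < m by omega),
          ← List.getD_eq_getElem y 0 (show t + s < m by omega),
          hper s (by omega), hper (t + s) (by omega),
          Nat.mod_eq_of_lt (show s < p by omega), mod_arith2 (by omega),
          hFeq s (by omega)]
      · rw [hper d0 (by omega), hper (t + d0) (by omega),
          Nat.mod_eq_of_lt (show d0 < p by omega), mod_arith2 (by omega)]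
        exact hlt0
    · -- m - t ≤ d0
      have harith : m - t + t % p < p := by omega
      have hmod3 : m % p = m - t + t % p := mod_arith3 htm harith
      refine ⟨m - t, le_refl _, ?_, Or.inr ⟨rfl, ?_⟩⟩
      · rw [List.take_of_length_le (le_of_eq (List.length_drop : (y.drop t).length = y.length - t))]
        refine List.ext_getElem (by rw [List.length_take, List.length_drop]; omega) ?_
        intro s hs1 hs2
        rw [List.length_take] at hs1
        rw [List.length_drop] at hs2
        rw [List.getElem_take, List.getElem_drop,
          ← List.getD_eq_getElem y 0 (show s < m by omega),
          ← List.getD_eq_getElem y 0 (show t + s < m by omega),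
          hper s (by omega), hper (t + s) (by omega),
          Nat.mod_eq_of_lt (show s < p by omega), mod_arith2 (by omega),
          hFeq s (by omega)]
      · rw [Nat.mod_eq_of_lt (show m - t < p by omega), hmod3]
        rcases lt_or_eq_of_le (show m - t ≤ d0 by omega) with hc | hc
        · rw [hFeq (m - t) hc]
          rw [show t % p + (m - t) = m - t + t % p by omega]
        · rw [hc, Nat.add_comm d0 (t % p)]
          exact le_of_lt hlt0

private lemma lyndon_extension {u y : List ℕ} (hu : IsLyndon u) (hp : 0 < u.length)
    (hper : ∀ j, j < y.length → y.getD j 0 = u.getD (j % u.length) 0)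
    (hlen : u.length ≤ y.length) {b : ℕ}
    (hb : u.getD (y.length % u.length) 0 < b) : IsLyndon (y ++ [b]) := by
  set p := u.length
  set m := y.length with hmdef
  constructor
  · simp
  intro i hi0 hilen
  rw [List.length_append, List.length_singleton] at hilen
  have him : i ≤ m := by omega
  have hxlen : (y ++ [b]).length = m + 1 := by
    rw [List.length_append, List.length_singleton]
  rw [List.rotate_eq_drop_append_take (by omega)]
  obtain ⟨d, hd, htk, hbr⟩ := periodic_rotate_mismatch hu hp hper hi0 him hlen
  have hdrop : (y ++ [b]).drop i = y.drop i ++ [b] := List.drop_append_of_le_length him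
  have hdlen : (y.drop i).length = m - i := List.length_drop ..
  rw [hdrop, List.append_assoc]
  have htail : ([b] ++ (y ++ [b]).take i).length = 1 + i := by
    rw [List.length_append, List.length_singleton, List.length_take]; omega
  have hRlen : (y.drop i ++ ([b] ++ (y ++ [b]).take i)).length = m + 1 := by
    rw [List.length_append, hdlen, htail]; omega
  rcases hbr with ⟨h2, hlt⟩ | ⟨hdeq, hle⟩
  · -- mismatch strictly inside y
    have hdm : d < m := by omega
    have hdmi : d < (y.drop i).length := by omega
    refine lt_of_mismatch (d := d) (by omega) (by omega) ?_ ?_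
    · rw [List.take_append_of_le_length (show d ≤ m from le_of_lt hdm),
        List.take_append_of_le_length (le_of_lt hdmi), ← htk]
    · have e1 : (y ++ [b])[d]'(by omega) = y[d]'hdm := List.getElem_append_left hdm
      have e2 : (y.drop i ++ ([b] ++ (y ++ [b]).take i))[d]'(by omega)
          = (y.drop i)[d]'hdmi := List.getElem_append_left hdmi
      have e3 : (y.drop i)[d]'hdmi = y[i + d]'(by omega) := List.getElem_drop ..
      rw [List.getD_eq_getElem y 0 hdm,
        List.getD_eq_getElem y 0 (show i + d < m by omega)] at hlt
      rw [e1, e2, e3]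
      exact hlt
  · -- mismatch at the final letter b
    have hdm : d < m := by omega
    refine lt_of_mismatch (d := d) (by omega) (by omega) ?_ ?_
    · rw [List.take_append_of_le_length (show d ≤ m from le_of_lt hdm),
        List.take_append_of_le_length (show d ≤ (y.drop i).length by omega), ← htk]
    · have e1 : (y ++ [b])[d]'(by omega) = y[d]'hdm := List.getElem_append_left hdm
      have e2 : (y.drop i ++ ([b] ++ (y ++ [b]).take i))[d]'(by omega)
          = ([b] ++ (y ++ [b]).take i)[d - (y.drop i).length]'(by omega) :=
        List.getElem_append_right (by omega)
      have e3 : ([b] ++ (y ++ [b]).take i)[d - (y.drop i).length]'(by omega) = b := by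
        simp [hdlen, show d - (m - i) = 0 from by omega]
      have hle' : y.getD d 0 ≤ u.getD (y.length % u.length) 0 := by
        rw [hper d hdm]; exact hle
      rw [List.getD_eq_getElem y 0 hdm] at hle'
      rw [e1, e2, e3]
      exact lt_of_le_of_lt hle' hb

private lemma periodic_decomp : ∀ (n p : ℕ) (w : List ℕ), 0 < p → w.length = n → p < n →
    (∀ j, j < n → w.getD j 0 = (w.take p).getD (j % p) 0) →
    ∃ j i : ℕ, 1 ≤ j ∧ 1 ≤ i ∧ i ≤ p ∧
      w = (List.replicate j (w.take p)).flatten ++ w.take i := by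
  intro n
  induction n using Nat.strong_induction_on with
  | _ n IH =>
  intro p w hp hn hlt hper
  have hulen : (w.take p).length = p := by rw [List.length_take]; omega
  by_cases hbase : n - p ≤ p
  · refine ⟨1, n - p, le_refl _, by omega, hbase, ?_⟩
    have hdt : w.drop p = w.take (n - p) := by
      refine List.ext_getElem (by rw [List.length_drop, List.length_take]; omega) ?_
      intro s hs1 hs2
      rw [List.length_drop] at hs1
      rw [List.getElem_take, List.getElem_drop,
        ← List.getD_eq_getElem w 0 (show s < w.length by omega),
        ← List.getD_eq_getElem w 0 (show p + s < w.length by omega),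
        hper s (by omega), hper (p + s) (by omega), Nat.add_mod_left]
    conv_lhs => rw [← List.take_append_drop p w, hdt]
    simp
  · have hw'len : (w.drop p).length = n - p := by rw [List.length_drop]; omega
    have hu' : (w.drop p).take p = w.take p := by
      refine List.ext_getElem (by rw [List.length_take, List.length_take]; omega) ?_
      intro s hs1 hs2
      rw [List.length_take] at hs1
      rw [List.getElem_take, List.getElem_take, List.getElem_drop,
        ← List.getD_eq_getElem w 0 (show p + s < w.length by omega),
        ← List.getD_eq_getElem w 0 (show s < w.length by omega),
        hper (p + s) (by omega), hper s (by omega), Nat.add_mod_left]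
    have hper' : ∀ j, j < n - p → (w.drop p).getD j 0 = ((w.drop p).take p).getD (j % p) 0 := by
      intro j hj
      rw [hu', getD_drop w p j (by omega), hper (p + j) (by omega), Nat.add_mod_left]
    obtain ⟨j, i, hj1, hi1, hi2, heq⟩ :=
      IH (n - p) (by omega) p (w.drop p) hp hw'len (by omega) hper'
    rw [hu'] at heq
    have hti : (w.drop p).take i = w.take i := by
      refine List.ext_getElem (by rw [List.length_take, List.length_take]; omega) ?_
      intro s hs1 hs2
      rw [List.length_take] at hs1
      rw [List.getElem_take, List.getElem_take, List.getElem_drop,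
        ← List.getD_eq_getElem w 0 (show p + s < w.length by omega),
        ← List.getD_eq_getElem w 0 (show s < w.length by omega),
        hper (p + s) (by omega), hper s (by omega), Nat.add_mod_left]
    rw [hti] at heq
    refine ⟨j + 1, i, by omega, hi1, hi2, ?_⟩
    conv_lhs => rw [← List.take_append_drop p w, heq]
    rw [List.replicate_succ, List.flatten_cons, List.append_assoc]

/-- A prenecklace with `lyn(w) < |w|` is a power of its longest Lyndon prefix followed
by a nonempty prefix of that Lyndon prefix. -/
theorem prenecklace_periodic_structure (k : ℕ) (w : List ℕ) (hw : IsPrenecklace k w)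
    (n : ℕ) (hn : n = w.length) (p : ℕ) (hp : p = lyn w) (hlt : p < n) :
    ∃ j i : ℕ, 1 ≤ j ∧ 1 ≤ i ∧ i ≤ p ∧
      w = (List.replicate j (w.take p)).flatten ++ w.take i := by
  subst hn
  obtain ⟨v, hvpre, -, hneck⟩ := hw
  have hw0 : 0 < w.length := by omega
  have h1S : (1 : ℕ) ∈ {q | q ≤ w.length ∧ IsLyndon (w.take q)} := by
    refine ⟨by omega, ?_, ?_⟩
    · intro hnil
      have h0 := congrArg List.length hnil
      rw [List.length_take, List.length_nil] at h0
      omega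
    · intro i0 hi0 hi0len
      rw [List.length_take] at hi0len
      exact absurd hi0 (by omega)
  have hbdd : BddAbove {q | q ≤ w.length ∧ IsLyndon (w.take q)} :=
    ⟨w.length, fun q hq => hq.1⟩
  have hmemS : lyn w ∈ {q | q ≤ w.length ∧ IsLyndon (w.take q)} :=
    Nat.sSup_mem ⟨1, h1S⟩ hbdd
  rw [← hp] at hmemS
  have hp1 : 1 ≤ p := by
    rw [hp]
    exact le_csSup hbdd h1S
  have hpn : p ≤ w.length := hmemS.1
  have hulyn : IsLyndon (w.take p) := hmemS.2
  have hulen : (w.take p).length = p := by rw [List.length_take]; omega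
  have hp0 : 0 < (w.take p).length := by omega
  have hvlen : w.length ≤ v.length := hvpre.length_le
  have hvw : ∀ s (h1 : s < v.length) (h2 : s < w.length), v[s]'h1 = w[s]'h2 :=
    fun s h1 h2 => (hvpre.getElem h2).symm
  have key : ∀ j, j < w.length → w.getD j 0 = (w.take p).getD (j % p) 0 := by
    intro j
    induction j using Nat.strong_induction_on with
    | _ j IHj =>
    intro hj
    by_cases hjp : j < p
    · rw [Nat.mod_eq_of_lt hjp, getD_take w p j hjp (by omega)]
    · push_neg at hjp
      have hylen : (w.take j).length = j := by rw [List.length_take]; omega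
      have hyper : ∀ s, s < (w.take j).length →
          (w.take j).getD s 0 = (w.take p).getD (s % (w.take p).length) 0 := by
        intro s hs
        rw [hylen] at hs
        rw [getD_take w j s hs (by omega), hulen]
        exact IHj s hs (by omega)
      rcases lt_trichotomy (w.getD j 0) ((w.take p).getD (j % p) 0) with hc | hc | hc
      · -- would contradict the necklace property of v
        exfalso
        have htr : p * (j / p) + j % p = j := Nat.div_add_mod j p
        set t := p * (j / p) with htdef
        set r := j % p with hrdef
        have hrp : r < p := Nat.mod_lt j (by omega)
        have hmis : v.drop t ++ v.take t < v := by
          refine lt_of_mismatch (d := r)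
            (by rw [List.length_append, List.length_drop, List.length_take]; omega)
            (by omega) ?_ ?_
          · rw [List.take_append_of_le_length (by rw [List.length_drop]; omega)]
            refine List.ext_getElem
              (by rw [List.length_take, List.length_take, List.length_drop]; omega) ?_
            intro s hs1 hs2
            rw [List.length_take] at hs1
            rw [List.getElem_take, List.getElem_take, List.getElem_drop,
              hvw (t + s) (by omega) (by omega), hvw s (by omega) (by omega),
              ← List.getD_eq_getElem w 0 (show t + s < w.length by omega),
              ← List.getD_eq_getElem w 0 (show s < w.length by omega),
              IHj (t + s) (by omega) (by omega), IHj s (by omega) (by omega)]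
            have hidx : (t + s) % p = s % p := by
              rw [htdef]; exact Nat.mul_add_mod p (j / p) s
            rw [hidx]
          · have pf1 : r < (v.drop t).length := by rw [List.length_drop]; omega
            have eL : (v.drop t ++ v.take t)[r]'(by
                rw [List.length_append, List.length_drop, List.length_take]; omega)
                = v[t + r]'(by omega) := by
              rw [List.getElem_append_left pf1]
              exact List.getElem_drop ..
            rw [eL, hvw (t + r) (by omega) (by omega), hvw r (by omega) (by omega),
              ← List.getD_eq_getElem w 0 (show t + r < w.length by omega),
              ← List.getD_eq_getElem w 0 (show r < w.length by omega),
              show t + r = j from htr, IHj r (by omega) (by omega),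
              Nat.mod_eq_of_lt hrp]
            exact hc
        have hle := hneck t
        rw [List.rotate_eq_drop_append_take (by omega)] at hle
        exact lt_irrefl _ (lt_of_le_of_lt hle hmis)
      · exact hc
      · -- would contradict maximality of the Lyndon prefix
        exfalso
        have hext : IsLyndon (w.take j ++ [w.getD j 0]) := by
          apply lyndon_extension hulyn hp0 hyper (by omega)
          rw [hylen, hulen]
          exact hc
        have hxy : w.take j ++ [w.getD j 0] = w.take (j + 1) := by
          rw [List.take_succ, List.getElem?_eq_getElem hj, List.getD_eq_getElem w 0 hj]
          rfl
        have hjS : (j + 1) ∈ {q | q ≤ w.length ∧ IsLyndon (w.take q)} :=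
          ⟨by omega, by rw [← hxy]; exact hext⟩
        have hcontra : j + 1 ≤ p := by
          rw [hp]
          exact le_csSup hbdd hjS
        omega
  exact periodic_decomp w.length p w (by omega) rfl hlt key
end

section
/- Let k ≥ 2 and n_0,…,n_{k−1} ≥ 1. The number of stable necklaces with content (n_0,…,n_{k−1}) equals Σ_{i=1}^{k−1} L_k(n_0,…,n_{i−1}, n_i − 1, n_{i+1},…, n_{k−1}). Here a necklace a_1⋯a_n is stable if a_1⋯a_{n−1} is a Lyndon word. -/
open List

section Helpers

lemma lex_append_of_lt {x y s t : List ℕ} (h : x < y) (hl : x.length = y.length) :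
    x ++ s < y ++ t := by
  induction h with
  | nil => simp at hl
  | @cons a l₁ l₂ h ih => exact List.Lex.cons (ih (by simpa using hl))
  | rel h => exact List.Lex.rel h

lemma append_lt_append_left_iff (x : List ℕ) {s t : List ℕ} :
    x ++ s < x ++ t ↔ s < t := by
  induction x with
  | nil => simp
  | cons a x ih =>
    constructor
    · intro h
      rcases h with _ | h | h
      · exact absurd ‹a < a› (lt_irrefl a)
      · exact ih.mp h
    · intro h; exact List.Lex.cons (ih.mpr h)

lemma head_le_head_of_lt {a b : ℕ} {x y : List ℕ} (h : a :: x < b :: y) : a ≤ b := by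
  rcases h with _ | h | h
  · exact le_of_lt ‹a < b›
  · exact le_refl _

lemma lyndon_take_lt_drop {u : List ℕ} (hu : IsLyndon u) {j : ℕ} (hj0 : 0 < j)
    (hjn : j < u.length) : u.take (u.length - j) < u.drop j := by
  set n := u.length with hn
  have hrot : u.rotate j = u.drop j ++ u.take j := rotate_eq_drop_append_take hjn.le
  have hlt : u < u.drop j ++ u.take j := hrot ▸ hu.2 j hj0 hjn
  have hlen : (u.take (n - j)).length = (u.drop j).length := by
    simp [hn]
  rcases lt_trichotomy (u.take (n - j)) (u.drop j) with h | h | h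
  · exact h
  · exfalso
    have h1 : u.take (n - j) ++ u.drop (n - j) < u.take (n - j) ++ u.take j := by
      rw [take_append_drop]; rw [← h] at hlt; exact hlt
    have h2 : u.drop (n - j) < u.take j := (append_lt_append_left_iff _).mp h1
    have hj0' : 0 < n - j := by omega
    have hjn' : n - j < n := by omega
    have hrot2 : u.rotate (n - j) = u.drop (n - j) ++ u.take (n - j) :=
      rotate_eq_drop_append_take hjn'.le
    have hlt2 : u < u.drop (n - j) ++ u.take (n - j) := hrot2 ▸ hu.2 (n - j) hj0' hjn'
    have h3 : u.take j ++ u.drop j < u.drop (n - j) ++ u.take (n - j) := by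
      rw [take_append_drop]; exact hlt2
    have hlen2 : (u.drop (n - j)).length = (u.take j).length := by simp [hn]; omega
    have h4 : u.drop (n - j) ++ u.take (n - j) < u.take j ++ u.drop j :=
      lex_append_of_lt h2 hlen2
    exact absurd (lt_trans h3 h4) (lt_irrefl _)
  · exfalso
    have h4 : u.drop j ++ u.take j < u.take (n - j) ++ u.drop (n - j) :=
      lex_append_of_lt h hlen.symm
    rw [take_append_drop] at h4
    exact absurd (lt_trans hlt h4) (lt_irrefl _)

lemma lyndon_append_singleton {u : List ℕ} (hu : IsLyndon u) {a b : ℕ}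
    (hh : u.head? = some a) (hab : a < b) : IsLyndon (u ++ [b]) := by
  have hne : u ≠ [] := hu.1
  set n := u.length with hn
  have hn0 : 0 < n := length_pos_iff.mpr hne
  constructor
  · simp
  · intro j hj0 hjn
    have hjn' : j < n + 1 := by simpa using hjn
    have hrot : (u ++ [b]).rotate j = (u ++ [b]).drop j ++ (u ++ [b]).take j :=
      rotate_eq_drop_append_take (by simp; omega)
    rw [hrot]
    rcases eq_or_lt_of_le (Nat.lt_succ_iff.mp hjn') with hje | hjlt
    · subst hje
      have hd : (u ++ [b]).drop u.length = [b] := by simp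
      have ht : (u ++ [b]).take u.length = u := by simp
      rw [hd, ht]
      obtain ⟨u', rfl⟩ : ∃ u', u = a :: u' := by
        cases u with
        | nil => simp at hh
        | cons x t => simp at hh; exact ⟨t, by rw [hh]⟩
      exact List.Lex.rel hab
    · have hd : (u ++ [b]).drop j = u.drop j ++ [b] := drop_append_of_le_length hjlt.le
      have ht : (u ++ [b]).take j = u.take j := take_append_of_le_length hjlt.le
      rw [hd, ht]
      have key := lyndon_take_lt_drop hu hj0 hjlt
      have hlen : (u.take (n - j)).length = (u.drop j).length := by simp [hn]
      calc u ++ [b] = u.take (n - j) ++ (u.drop (n - j) ++ [b]) := by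
            rw [← append_assoc, take_append_drop]
        _ < u.drop j ++ ([b] ++ u.take j) := lex_append_of_lt key hlen
        _ = u.drop j ++ [b] ++ u.take j := by rw [append_assoc]

lemma lyndon_isNecklace {u : List ℕ} (hu : IsLyndon u) : IsNecklace u := by
  intro i
  have hn0 : 0 < u.length := length_pos_iff.mpr hu.1
  rw [← rotate_mod]
  rcases Nat.eq_zero_or_pos (i % u.length) with h | h
  · rw [h, rotate_zero]
  · exact le_of_lt (hu.2 _ h (Nat.mod_lt _ hn0))

lemma lyndon_head_min {u : List ℕ} (hu : IsLyndon u) {h a : ℕ}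
    (hh : u.head? = some h) (ha : a ∈ u) : h ≤ a := by
  obtain ⟨j, hj, rfl⟩ := List.getElem_of_mem ha
  rcases Nat.eq_zero_or_pos j with h0 | h0
  · subst h0; cases u with
    | nil => simp at hh
    | cons x t => simp at hh ⊢; omega
  · have hlt := hu.2 j h0 hj
    rw [rotate_eq_drop_append_take hj.le] at hlt
    have ht : u.drop j = u[j] :: u.drop (j+1) := List.drop_eq_getElem_cons hj
    obtain ⟨u', rfl⟩ : ∃ u', u = h :: u' := by
      cases u with
      | nil => simp at hh
      | cons x t => simp at hh; exact ⟨t, by rw [hh]⟩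
    rw [ht] at hlt
    exact head_le_head_of_lt hlt

lemma all_zero_of_le {w : List ℕ} (hle : w ≤ 0 :: w.dropLast)
    (hlast : w.getLast? = some 0) : ∀ a ∈ w, a = 0 := by
  induction w with
  | nil => simp
  | cons b t ih =>
    cases t with
    | nil =>
      simp at hlast; simp [hlast]
    | cons x s =>
      have hdl : (b :: x :: s).dropLast = b :: (x :: s).dropLast := rfl
      rw [hdl] at hle
      have hb : b = 0 := by
        rcases lt_or_eq_of_le hle with h | h
        · rcases h with _ | h | h
          · omega
          · rfl
        · injection h
      subst hb
      have hle' : x :: s ≤ 0 :: (x :: s).dropLast := by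
        rcases lt_or_eq_of_le hle with h | h
        · rcases h with _ | h | h
          · omega
          · exact le_of_lt (by assumption)
        · injection h with _ h2; exact le_of_eq h2
      have hlast' : (x :: s).getLast? = some 0 := by
        rwa [getLast?_cons_cons] at hlast
      intro a ha
      rcases mem_cons.mp ha with rfl | ha'
      · rfl
      · exact ih hle' hlast' a ha'

lemma length_eq_sum_count {k : ℕ} {w : List ℕ} (hw : ∀ a ∈ w, a < k) :
    w.length = ∑ i : Fin k, w.count i.val := by
  induction w with
  | nil => simp
  | cons a t ih =>
    have hak : a < k := hw a (mem_cons_self)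
    have ht : ∀ b ∈ t, b < k := fun b hb => hw b (mem_cons_of_mem a hb)
    simp only [length_cons, ih ht, count_cons, beq_iff_eq]
    rw [Finset.sum_add_distrib]
    have : ∑ i : Fin k, (if a = i.val then 1 else 0) = 1 := by
      rw [Finset.sum_congr rfl (g := fun i => if i = ⟨a, hak⟩ then 1 else 0)
        (fun i _ => by
          congr 1
          simp only [eq_iff_iff]
          constructor
          · intro h; exact Fin.ext h.symm
          · intro h; subst h; rfl)]
      simp
    rw [this]

lemma finite_words (k N : ℕ) : {w : List ℕ | w.length = N ∧ ∀ a ∈ w, a < k}.Finite := by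
  induction N with
  | zero =>
    apply Set.Finite.subset (Set.finite_singleton ([] : List ℕ))
    rintro w ⟨hl, -⟩
    simp [List.length_eq_zero_iff.mp hl]
  | succ n ih =>
    apply Set.Finite.subset (Set.Finite.image2 (fun a t => a :: t) (Set.finite_Iio k) ih)
    rintro w ⟨hl, hb⟩
    cases w with
    | nil => simp at hl
    | cons a t =>
      exact ⟨a, hb a (mem_cons_self), t,
        ⟨by simpa using hl, fun b hbt => hb b (mem_cons_of_mem a hbt)⟩, rfl⟩

lemma encard_biUnion {ι α : Type*} (F : Finset ι) (f : ι → Set α)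
    (hd : ∀ i ∈ F, ∀ j ∈ F, i ≠ j → Disjoint (f i) (f j)) :
    (⋃ i ∈ F, f i).encard = ∑ i ∈ F, (f i).encard := by
  classical
  induction F using Finset.induction with
  | empty => simp
  | @insert a s ha ih =>
    rw [Finset.sum_insert ha]
    have : (⋃ i ∈ insert a s, f i) = f a ∪ ⋃ i ∈ s, f i := by
      simp [Set.biUnion_insert]
    rw [this, Set.encard_union_eq, ih (fun i hi j hj hij =>
      hd i (Finset.mem_insert_of_mem hi) j (Finset.mem_insert_of_mem hj) hij)]
    rw [Set.disjoint_iUnion₂_right]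
    intro i hi
    exact hd a (Finset.mem_insert_self a s) i (Finset.mem_insert_of_mem hi)
      (fun h => ha (h ▸ hi))

end Helpers

/-- The number of stable necklaces with fixed content. -/
theorem stable_necklace_count (k : ℕ) (hk : 2 ≤ k) (c : Fin k → ℕ) (hc : ∀ i, 1 ≤ c i) :
    {w : List ℕ | (∀ a ∈ w, a < k) ∧ (∀ i : Fin k, w.count i.val = c i) ∧
        IsNecklace w ∧ IsLyndon w.dropLast}.ncard =
      ∑ i ∈ Finset.univ.filter (fun i : Fin k => i ≠ ⟨0, by omega⟩),
        Lk k (Function.update c i (c i - 1)) := by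
  classical
  set z0 : Fin k := ⟨0, by omega⟩ with hz0
  set z1 : Fin k := ⟨1, by omega⟩ with hz1
  set F : Finset (Fin k) := Finset.univ.filter (fun i : Fin k => i ≠ z0) with hFdef
  set S : Set (List ℕ) := {w : List ℕ | (∀ a ∈ w, a < k) ∧ (∀ i : Fin k, w.count i.val = c i) ∧
      IsNecklace w ∧ IsLyndon w.dropLast} with hSdef
  set T : Fin k → Set (List ℕ) := fun i =>
    {w : List ℕ | (∀ a ∈ w, a < k) ∧
      (∀ j : Fin k, w.count j.val = Function.update c i (c i - 1) j) ∧ IsLyndon w} with hTdef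
  -- basic facts about members of S
  have hSne : ∀ w ∈ S, w ≠ [] := by
    rintro w ⟨-, hcnt, -, -⟩ rfl
    have := hcnt z1
    simp at this
    have := hc z1
    omega
  have hS1 : ∀ w ∈ S, (1 : ℕ) ∈ w := by
    rintro w ⟨-, hcnt, -, -⟩
    have h1 : w.count 1 = c z1 := hcnt z1
    have := hc z1
    exact List.count_pos_iff.mp (by omega)
  have hSlast : ∀ w ∈ S, ∀ (hne : w ≠ []), w.getLast hne ≠ 0 := by
    intro w hw hne h0
    have hnk := hw.2.2.1
    have hdec : w.dropLast ++ [w.getLast hne] = w := dropLast_append_getLast hne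
    have hrot : w.rotate w.dropLast.length = w.getLast hne :: w.dropLast := by
      conv_lhs => rw [← hdec]
      rw [dropLast_concat, rotate_append_length_eq]
      rfl
    have hle : w ≤ 0 :: w.dropLast := by
      have := hnk w.dropLast.length
      rw [hrot, h0] at this
      exact this
    have hlast : w.getLast? = some 0 := by
      rw [getLast?_eq_getLast hne, h0]
    have := all_zero_of_le hle hlast 1 (hS1 w hw)
    omega
  -- forward: dropLast maps S into the union
  have hmapsto : ∀ w ∈ S, ∃ i ∈ F, w.dropLast ∈ T i := by
    intro w hw
    have hne := hSne w hw
    obtain ⟨hlt, hcnt, hnk, hly⟩ := hw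
    set b : ℕ := w.getLast hne with hb
    have hbk : b < k := hlt b (getLast_mem hne)
    have hb0 : b ≠ 0 := hSlast w ⟨hlt, hcnt, hnk, hly⟩ hne
    set bf : Fin k := ⟨b, hbk⟩ with hbf
    refine ⟨bf, ?_, ?_, ?_, hly⟩
    · simp [hFdef, hbf, hz0, Fin.ext_iff, hb0]
    · intro a ha
      exact hlt a (dropLast_subset w ha)
    · intro j
      have hdec : w.dropLast ++ [b] = w := dropLast_append_getLast hne
      have hcj : w.dropLast.count j.val + List.count j.val [b] = c j := by
        rw [← List.count_append, hdec]; exact hcnt j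
      rcases eq_or_ne j bf with rfl | hjb
      · have hcb : List.count (bf : Fin k).val [b] = 1 := by simp [hbf]
        rw [Function.update_self]
        have := hc bf
        simp [hbf] at hcj ⊢
        omega
      · have hjbv : j.val ≠ b := fun h => hjb (Fin.ext (by simp [hbf, h]))
        have hcb : List.count j.val [b] = 0 := List.count_eq_zero.mpr (by simp [hjbv])
        rw [Function.update_of_ne hjb]
        omega
  -- backward
  have hback : ∀ i ∈ F, ∀ u ∈ T i, (u ++ [i.val]) ∈ S ∧ (u ++ [i.val]).dropLast = u := by
    intro i hiF u hu
    obtain ⟨hlt, hcnt, hly⟩ := hu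
    have hiz : i.val ≠ 0 := by
      intro h
      have : i = z0 := Fin.ext (by simp [hz0, h])
      simp [hFdef, this] at hiF
    have hune : u ≠ [] := hly.1
    have h0u : (0 : ℕ) ∈ u := by
      have h0 : u.count 0 = c z0 := by
        have h0' := hcnt z0
        rw [Function.update_of_ne (fun h => hiz (by simp [← h, hz0]))] at h0'
        exact h0'
      have := hc z0
      exact List.count_pos_iff.mp (by omega)
    obtain ⟨h, hh⟩ : ∃ h, u.head? = some h := by
      cases u with
      | nil => simp at hune
      | cons x t => exact ⟨x, rfl⟩
    have hh0 : h = 0 := Nat.le_zero.mp (lyndon_head_min hly hh h0u)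
    have hwly : IsLyndon (u ++ [i.val]) :=
      lyndon_append_singleton hly hh (by omega)
    have hdl : (u ++ [i.val]).dropLast = u := dropLast_concat
    refine ⟨⟨?_, ?_, lyndon_isNecklace hwly, by rw [hdl]; exact hly⟩, hdl⟩
    · intro a ha
      rcases mem_append.mp ha with h1 | h1
      · exact hlt a h1
      · simp at h1; subst h1; exact i.isLt
    · intro j
      rw [List.count_append]
      have hcj := hcnt j
      rcases eq_or_ne j i with rfl | hji
      · rw [Function.update_self] at hcj
        have : List.count j.val [j.val] = 1 := by simp
        rw [hcj, this]
        have := hc j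
        omega
      · rw [Function.update_of_ne hji] at hcj
        have hjiv : j.val ≠ i.val := fun h => hji (Fin.ext h)
        have : List.count j.val [i.val] = 0 := List.count_eq_zero.mpr (by simp [hjiv])
        rw [hcj, this]
        omega
  -- image equality
  have himg : List.dropLast '' S = ⋃ i ∈ F, T i := by
    ext u
    constructor
    · rintro ⟨w, hw, rfl⟩
      obtain ⟨i, hiF, hiT⟩ := hmapsto w hw
      exact Set.mem_biUnion hiF hiT
    · intro hu
      obtain ⟨i, hiF, hiT⟩ := Set.mem_iUnion₂.mp hu
      obtain ⟨hwS, hdl⟩ := hback i hiF u hiT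
      exact ⟨u ++ [i.val], hwS, hdl⟩
  -- injectivity
  have hinj : Set.InjOn List.dropLast S := by
    intro w hw w' hw' heq
    have hne := hSne w hw
    have hne' := hSne w' hw'
    set b : ℕ := w.getLast hne with hb
    set b' : ℕ := w'.getLast hne' with hb'
    have hbk : b < k := hw.1 b (getLast_mem hne)
    have hdec : w.dropLast ++ [b] = w := dropLast_append_getLast hne
    have hdec' : w'.dropLast ++ [b'] = w' := dropLast_append_getLast hne'
    have hbb : b = b' := by
      by_contra hne2
      have h1 : w.count b = c ⟨b, hbk⟩ := hw.2.1 ⟨b, hbk⟩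
      have h2 : w'.count b = c ⟨b, hbk⟩ := hw'.2.1 ⟨b, hbk⟩
      rw [← hdec, List.count_append] at h1
      rw [← hdec', List.count_append] at h2
      have e1 : List.count b [b] = 1 := by simp
      have e2 : List.count b [b'] = 0 := List.count_eq_zero.mpr (by simp [hne2])
      rw [heq] at h1
      rw [e1] at h1; rw [e2] at h2
      omega
    rw [← hdec, ← hdec', heq, hbb]
  -- finiteness of each T i
  have hfin : ∀ i : Fin k, (T i).Finite := by
    intro i
    apply Set.Finite.subset (finite_words k (∑ j : Fin k, Function.update c i (c i - 1) j))
    rintro w ⟨hlt, hcnt, -⟩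
    refine ⟨?_, hlt⟩
    rw [length_eq_sum_count hlt]
    exact Finset.sum_congr rfl (fun j _ => hcnt j)
  -- disjointness
  have hdisj : ∀ i ∈ F, ∀ j ∈ F, i ≠ j → Disjoint (T i) (T j) := by
    intro i _ j _ hij
    rw [Set.disjoint_left]
    rintro w ⟨-, hci, -⟩ ⟨-, hcj, -⟩
    have h1 : w.count i.val = c i - 1 := by
      have := hci i; rwa [Function.update_self] at this
    have h2 : w.count i.val = c i := by
      have := hcj i; rwa [Function.update_of_ne hij] at this
    have := hc i
    omega
  -- put it together with encard
  have hSen : S.encard = ∑ i ∈ F, (T i).encard := by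
    rw [← hinj.encard_image, himg, encard_biUnion F T hdisj]
  have hTen : ∀ i : Fin k, (T i).encard = ((Lk k (Function.update c i (c i - 1)) : ℕ) : ℕ∞) := by
    intro i
    have h : Lk k (Function.update c i (c i - 1)) = (T i).ncard := rfl
    rw [h, Set.ncard_def]
    exact (hfin i).encard_eq_coe
  rw [Set.ncard_def]
  show S.encard.toNat = ∑ i ∈ F, Lk k (Function.update c i (c i - 1))
  rw [hSen, Finset.sum_congr rfl (fun i _ => hTen i), ← Nat.cast_sum]
  exact ENat.toNat_coe _
end

section
/- If d ∈ {1, 2, n−2, n−1} and 0 < d < n with (n,d) ≠ (2,1), then N(n,d) = L(n−1,d) + L(n−1,d−1). -/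
open List

namespace PascalAux

lemma cons_lt {a : ℕ} {x y : List ℕ} (h : x < y) : a :: x < a :: y := List.Lex.cons h

lemma lt_A {s t : ℕ} (hst : s < t) {a b : ℕ} (h : b < a) (x y : List ℕ) :
    replicate a s ++ x < replicate b s ++ t :: y := by
  induction b generalizing a with
  | zero =>
      obtain ⟨a', rfl⟩ : ∃ a', a = a' + 1 := ⟨a - 1, by omega⟩
      simp only [replicate_succ, cons_append, replicate_zero, nil_append]
      exact List.Lex.rel hst
  | succ b ih =>
      obtain ⟨a', rfl⟩ : ∃ a', a = a' + 1 := ⟨a - 1, by omega⟩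
      simp only [replicate_succ, cons_append]
      exact List.Lex.cons (ih (by omega))

lemma lt_B {s t : ℕ} (hts : t < s) {a b : ℕ} (h : a < b) (x y : List ℕ) :
    replicate a s ++ t :: x < replicate b s ++ y := by
  induction a generalizing b with
  | zero =>
      obtain ⟨b', rfl⟩ : ∃ b', b = b' + 1 := ⟨b - 1, by omega⟩
      simp only [replicate_succ, cons_append, replicate_zero, nil_append]
      exact List.Lex.rel hts
  | succ a ih =>
      obtain ⟨b', rfl⟩ : ∃ b', b = b' + 1 := ⟨b - 1, by omega⟩
      simp only [replicate_succ, cons_append]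
      exact List.Lex.cons (ih (by omega))

lemma rep_cons_inj {s t : ℕ} (hst : s ≠ t) :
    ∀ {a a' : ℕ} {u u' : List ℕ},
      replicate a s ++ t :: u = replicate a' s ++ t :: u' → a = a' ∧ u = u' := by
  intro a
  induction a with
  | zero =>
      intro a' u u' h
      cases a' with
      | zero => simpa using h
      | succ a' =>
          simp only [replicate_zero, nil_append, replicate_succ, cons_append, List.cons.injEq] at h
          exact absurd h.1.symm hst
  | succ a ih =>
      intro a' u u' h
      cases a' with
      | zero =>
          simp only [replicate_zero, nil_append, replicate_succ, cons_append, List.cons.injEq] at h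
          exact absurd h.1 hst
      | succ a' =>
          simp only [replicate_succ, cons_append, List.cons.injEq] at h
          obtain ⟨h1, h2⟩ := ih h.2
          exact ⟨by omega, h2⟩

lemma rotate_eq {w A B : List ℕ} (i : ℕ) (hw : w = A ++ B) (hi : i = A.length) :
    w.rotate i = B ++ A := by
  subst hw hi
  rw [rotate_eq_drop_append_take (by simp), drop_left, take_left]

lemma isNecklace_of_lt_length {w : List ℕ} (hw : w ≠ [])
    (h : ∀ i < w.length, w ≤ w.rotate i) : IsNecklace w := by
  intro i
  rw [← List.rotate_mod]
  exact h _ (Nat.mod_lt _ (List.length_pos_iff.2 hw))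

lemma allRep01 : ∀ {w : List ℕ}, (∀ a ∈ w, a = 0 ∨ a = 1) → w.count 1 = 0 →
    w = replicate w.length 0 := by
  intro w
  induction w with
  | nil => simp
  | cons a w ih =>
      intro hb hc
      rcases hb a (by simp) with rfl | rfl
      · have hc' : w.count 1 = 0 := by simpa using hc
        rw [length_cons, replicate_succ]
        exact congrArg _ (ih (fun x hx => hb x (by simp [hx])) hc')
      · simp at hc

lemma allRep10 : ∀ {w : List ℕ}, (∀ a ∈ w, a = 0 ∨ a = 1) → w.count 0 = 0 →
    w = replicate w.length 1 := by
  intro w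
  induction w with
  | nil => simp
  | cons a w ih =>
      intro hb hc
      rcases hb a (by simp) with rfl | rfl
      · simp at hc
      · have hc' : w.count 0 = 0 := by simpa using hc
        rw [length_cons, replicate_succ]
        exact congrArg _ (ih (fun x hx => hb x (by simp [hx])) hc')

lemma splitFirst01 : ∀ {w : List ℕ}, (∀ a ∈ w, a = 0 ∨ a = 1) → 0 < w.count 1 →
    ∃ a w', w = replicate a 0 ++ 1 :: w' ∧ (∀ x ∈ w', x = 0 ∨ x = 1) ∧
      w'.count 1 + 1 = w.count 1 := by
  intro w
  induction w with
  | nil => simp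
  | cons a w ih =>
      intro hb hc
      rcases hb a (by simp) with rfl | rfl
      · have hc' : 0 < w.count 1 := by simpa using hc
        obtain ⟨a', w', rfl, hb', hcount⟩ := ih (fun x hx => hb x (by simp [hx])) hc'
        exact ⟨a' + 1, w', by simp [replicate_succ], hb', by simpa using hcount⟩
      · exact ⟨0, w, by simp, fun x hx => hb x (by simp [hx]), by simp⟩

lemma splitFirst10 : ∀ {w : List ℕ}, (∀ a ∈ w, a = 0 ∨ a = 1) → 0 < w.count 0 →
    ∃ a w', w = replicate a 1 ++ 0 :: w' ∧ (∀ x ∈ w', x = 0 ∨ x = 1) ∧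
      w'.count 0 + 1 = w.count 0 := by
  intro w
  induction w with
  | nil => simp
  | cons a w ih =>
      intro hb hc
      rcases hb a (by simp) with rfl | rfl
      · exact ⟨0, w, by simp, fun x hx => hb x (by simp [hx]), by simp⟩
      · have hc' : 0 < w.count 0 := by simpa using hc
        obtain ⟨a', w', rfl, hb', hcount⟩ := ih (fun x hx => hb x (by simp [hx])) hc'
        exact ⟨a' + 1, w', by simp [replicate_succ], hb', by simpa using hcount⟩

lemma count01 : ∀ {w : List ℕ}, (∀ a ∈ w, a = 0 ∨ a = 1) → w.count 0 + w.count 1 = w.length := by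
  intro w
  induction w with
  | nil => simp
  | cons a w ih =>
      intro hb
      have := ih (fun x hx => hb x (by simp [hx]))
      rcases hb a (by simp) with rfl | rfl <;> simp [count_cons] <;> omega

lemma binAlt {w : List ℕ} (hw : ∀ a ∈ w, a < 2) : ∀ a ∈ w, a = 0 ∨ a = 1 :=
  fun a ha => by have := hw a ha; omega

lemma dec1 {w : List ℕ} (hw : ∀ a ∈ w, a = 0 ∨ a = 1) (hc : w.count 1 = 1) :
    ∃ a b, w = replicate a 0 ++ 1 :: replicate b 0 := by
  obtain ⟨a, w', rfl, hb', hcount⟩ := splitFirst01 hw (by omega)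
  have : w'.count 1 = 0 := by omega
  exact ⟨a, w'.length, by rw [allRep01 hb' this]; simp⟩

lemma dec2 {w : List ℕ} (hw : ∀ a ∈ w, a = 0 ∨ a = 1) (hc : w.count 1 = 2) :
    ∃ a b c, w = replicate a 0 ++ 1 :: (replicate b 0 ++ 1 :: replicate c 0) := by
  obtain ⟨a, w', rfl, hb', hcount⟩ := splitFirst01 hw (by omega)
  obtain ⟨b, w'', rfl, hb'', hcount'⟩ := splitFirst01 hb' (by omega)
  have : w''.count 1 = 0 := by omega
  exact ⟨a, b, w''.length, by rw [allRep01 hb'' this]; simp⟩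

lemma dec1' {w : List ℕ} (hw : ∀ a ∈ w, a = 0 ∨ a = 1) (hc : w.count 0 = 1) :
    ∃ a b, w = replicate a 1 ++ 0 :: replicate b 1 := by
  obtain ⟨a, w', rfl, hb', hcount⟩ := splitFirst10 hw (by omega)
  have : w'.count 0 = 0 := by omega
  exact ⟨a, w'.length, by rw [allRep10 hb' this]; simp⟩

lemma dec2' {w : List ℕ} (hw : ∀ a ∈ w, a = 0 ∨ a = 1) (hc : w.count 0 = 2) :
    ∃ a b c, w = replicate a 1 ++ 0 :: (replicate b 1 ++ 0 :: replicate c 1) := by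
  obtain ⟨a, w', rfl, hb', hcount⟩ := splitFirst10 hw (by omega)
  obtain ⟨b, w'', rfl, hb'', hcount'⟩ := splitFirst10 hb' (by omega)
  have : w''.count 0 = 0 := by omega
  exact ⟨a, b, w''.length, by rw [allRep10 hb'' this]; simp⟩

lemma N_one {n : ℕ} (hn : 0 < n) : N n 1 = 1 := by
  have hset : {w : List ℕ | w.length = n ∧ (∀ a ∈ w, a < 2) ∧ w.count 1 = 1 ∧ IsNecklace w}
      = {replicate (n-1) 0 ++ [1]} := by
    ext w
    constructor
    · rintro ⟨hl, hb, hc, hneck⟩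
      obtain ⟨a, b, rfl⟩ := dec1 (binAlt hb) hc
      have hb0 : b = 0 := by
        by_contra hb0
        have hrot := hneck (a+1)
        have heq : (replicate a 0 ++ 1 :: replicate b 0).rotate (a+1)
            = replicate b 0 ++ (replicate a 0 ++ [1]) :=
          rotate_eq (a+1) (by simp) (by simp)
        have h2 : replicate b 0 ++ (replicate a 0 ++ [(1:ℕ)])
            = replicate (b+a) 0 ++ (1:ℕ) :: [] := by
          rw [replicate_add, append_assoc]
        have hlt : replicate (b+a) 0 ++ [(1:ℕ)] < replicate a 0 ++ 1 :: replicate b 0 :=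
          lt_A (by norm_num) (by omega) _ _
        rw [heq, h2] at hrot
        exact absurd hrot (not_le_of_gt hlt)
      subst hb0
      have hl' : a = n - 1 := by simp at hl; omega
      simp [hl']
    · intro hw
      simp only [Set.mem_singleton_iff] at hw
      subst hw
      refine ⟨by simp; omega, ?_, by simp [count_replicate], ?_⟩
      · intro a ha
        simp only [mem_append, mem_replicate, mem_singleton] at ha
        rcases ha with ⟨_, rfl⟩ | rfl <;> omega
      · apply isNecklace_of_lt_length (by simp)
        intro i hi
        rcases Nat.eq_zero_or_pos i with rfl | hi0
        · simp
        have hlen : (replicate (n-1) 0 ++ [(1:ℕ)]).length = (n-1) + 1 := by simp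
        have hle : i ≤ n - 1 := by omega
        have hw' : replicate (n-1) 0 ++ [(1:ℕ)]
            = replicate i 0 ++ (replicate (n-1-i) 0 ++ [1]) := by
          rw [← append_assoc, ← replicate_add]
          congr 2
          omega
        have heq := rotate_eq i hw' (by simp)
        rw [heq]
        have h2 : (replicate (n-1-i) 0 ++ [(1:ℕ)]) ++ replicate i 0
            = replicate (n-1-i) 0 ++ (1:ℕ) :: replicate i 0 := by simp
        rw [h2]
        exact le_of_lt (lt_A (by norm_num) (by omega) _ _)
  rw [N, hset, Set.ncard_singleton]

lemma L_one {m : ℕ} (hm : 0 < m) : L m 1 = 1 := by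
  have hset : {w : List ℕ | w.length = m ∧ (∀ a ∈ w, a < 2) ∧ w.count 1 = 1 ∧ IsLyndon w}
      = {replicate (m-1) 0 ++ [1]} := by
    ext w
    constructor
    · rintro ⟨hl, hb, hc, hne, hlyn⟩
      obtain ⟨a, b, rfl⟩ := dec1 (binAlt hb) hc
      have hb0 : b = 0 := by
        by_contra hb0
        have hrot := hlyn (a+1) (by omega) (by simp; omega)
        have heq : (replicate a 0 ++ 1 :: replicate b 0).rotate (a+1)
            = replicate b 0 ++ (replicate a 0 ++ [1]) :=
          rotate_eq (a+1) (by simp) (by simp)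
        have h2 : replicate b 0 ++ (replicate a 0 ++ [(1:ℕ)])
            = replicate (b+a) 0 ++ (1:ℕ) :: [] := by
          rw [replicate_add, append_assoc]
        have hlt : replicate (b+a) 0 ++ [(1:ℕ)] < replicate a 0 ++ 1 :: replicate b 0 :=
          lt_A (by norm_num) (by omega) _ _
        rw [heq, h2] at hrot
        exact absurd hrot hlt.asymm
      subst hb0
      have hl' : a = m - 1 := by simp at hl; omega
      simp [hl']
    · intro hw
      simp only [Set.mem_singleton_iff] at hw
      subst hw
      refine ⟨by simp; omega, ?_, by simp [count_replicate], by simp, ?_⟩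
      · intro a ha
        simp only [mem_append, mem_replicate, mem_singleton] at ha
        rcases ha with ⟨_, rfl⟩ | rfl <;> omega
      · intro i hi0 hi
        simp only [length_append, length_replicate, length_singleton] at hi
        have hw' : replicate (m-1) 0 ++ [(1:ℕ)]
            = replicate i 0 ++ (replicate (m-1-i) 0 ++ [1]) := by
          rw [← append_assoc, ← replicate_add]
          congr 2
          omega
        have heq := rotate_eq i hw' (by simp)
        rw [heq]
        have h2 : (replicate (m-1-i) 0 ++ [(1:ℕ)]) ++ replicate i 0
            = replicate (m-1-i) 0 ++ (1:ℕ) :: replicate i 0 := by simp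
        rw [h2]
        exact lt_A (by norm_num) (by omega) _ _
  rw [L, hset, Set.ncard_singleton]

lemma L_zero {m : ℕ} (hm : 2 ≤ m) : L m 0 = 0 := by
  have hset : {w : List ℕ | w.length = m ∧ (∀ a ∈ w, a < 2) ∧ w.count 1 = 0 ∧ IsLyndon w}
      = ∅ := by
    ext w
    simp only [Set.mem_setOf_eq, Set.mem_empty_iff_false, iff_false, not_and]
    rintro hl hb hc ⟨hne, hlyn⟩
    have hw := allRep01 (binAlt hb) hc
    rw [hl] at hw
    subst hw
    have hrot := hlyn 1 (by omega) (by simp; omega)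
    have heq : (replicate m 0).rotate 1 = replicate (m-1) 0 ++ replicate 1 0 :=
      rotate_eq 1 (by rw [← replicate_add]; congr 1; omega) (by simp)
    have h2 : replicate (m-1) 0 ++ replicate 1 (0:ℕ) = replicate m 0 := by
      rw [← replicate_add]; congr 1; omega
    rw [heq, h2] at hrot
    exact lt_irrefl _ hrot
  rw [L, hset, Set.ncard_empty]

lemma L_allones {m : ℕ} (hm : 2 ≤ m) : L m m = 0 := by
  have hset : {w : List ℕ | w.length = m ∧ (∀ a ∈ w, a < 2) ∧ w.count 1 = m ∧ IsLyndon w}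
      = ∅ := by
    ext w
    simp only [Set.mem_setOf_eq, Set.mem_empty_iff_false, iff_false, not_and]
    rintro hl hb hc ⟨hne, hlyn⟩
    have hc0 : w.count 0 = 0 := by
      have := count01 (binAlt hb); omega
    have hw := allRep10 (binAlt hb) hc0
    rw [hl] at hw
    subst hw
    have hrot := hlyn 1 (by omega) (by simp; omega)
    have heq : (replicate m 1).rotate 1 = replicate (m-1) 1 ++ replicate 1 1 :=
      rotate_eq 1 (by rw [← replicate_add]; congr 1; omega) (by simp)
    have h2 : replicate (m-1) 1 ++ replicate 1 (1:ℕ) = replicate m 1 := by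
      rw [← replicate_add]; congr 1; omega
    rw [heq, h2] at hrot
    exact lt_irrefl _ hrot
  rw [L, hset, Set.ncard_empty]


lemma N_onezero {n : ℕ} (hn : 2 ≤ n) : N n (n-1) = 1 := by
  have hset : {w : List ℕ | w.length = n ∧ (∀ a ∈ w, a < 2) ∧ w.count 1 = n-1 ∧ IsNecklace w}
      = {0 :: replicate (n-1) 1} := by
    ext w
    constructor
    · rintro ⟨hl, hb, hc, hneck⟩
      have hc0 : w.count 0 = 1 := by
        have := count01 (binAlt hb); omega
      obtain ⟨p, r, rfl⟩ := dec1' (binAlt hb) hc0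
      have hp0 : p = 0 := by
        by_contra hp0
        have hrot := hneck p
        have heq : (replicate p 1 ++ 0 :: replicate r 1).rotate p
            = (0 :: replicate r 1) ++ replicate p 1 := rotate_eq p rfl (by simp)
        have h2 : ((0:ℕ) :: replicate r 1) ++ replicate p 1 = 0 :: replicate (r+p) 1 := by
          rw [replicate_add]; simp
        have hlt : (0:ℕ) :: replicate (r+p) 1 < replicate p 1 ++ 0 :: replicate r 1 := by
          simpa using lt_B (show (0:ℕ) < 1 by norm_num)
            (show 0 < p by omega) (replicate (r+p) 1) (0 :: replicate r 1)
        rw [heq, h2] at hrot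
        exact absurd hrot (not_le_of_gt hlt)
      subst hp0
      simp only [replicate_zero, nil_append] at hl hc ⊢
      have : r = n - 1 := by simp at hl; omega
      simp [this]
    · intro hw
      simp only [Set.mem_singleton_iff] at hw
      subst hw
      refine ⟨by simp; omega, ?_, by simp [count_replicate], ?_⟩
      · intro a ha
        simp only [mem_cons, mem_replicate] at ha
        rcases ha with rfl | ⟨_, rfl⟩ <;> omega
      · apply isNecklace_of_lt_length (by simp)
        intro i hi
        rcases Nat.eq_zero_or_pos i with rfl | hi0
        · simp
        simp only [length_cons, length_replicate] at hi
        have hw' : (0:ℕ) :: replicate (n-1) 1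
            = (0 :: replicate (i-1) 1) ++ replicate (n-i) 1 := by
          simp only [cons_append, List.cons.injEq, true_and]
          rw [← replicate_add]
          congr 1
          omega
        have heq := rotate_eq i hw' (by simp; omega)
        rw [heq]
        refine le_of_lt ?_
        simpa using lt_B (show (0:ℕ) < 1 by norm_num) (show 0 < n - i by omega)
          (replicate (n-1) 1) ((0 :: replicate (i-1) 1))
  rw [N, hset, Set.ncard_singleton]

lemma L_onezero {m : ℕ} (hm : 2 ≤ m) : L m (m-1) = 1 := by
  have hset : {w : List ℕ | w.length = m ∧ (∀ a ∈ w, a < 2) ∧ w.count 1 = m-1 ∧ IsLyndon w}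
      = {0 :: replicate (m-1) 1} := by
    ext w
    constructor
    · rintro ⟨hl, hb, hc, hne, hlyn⟩
      have hc0 : w.count 0 = 1 := by
        have := count01 (binAlt hb); omega
      obtain ⟨p, r, rfl⟩ := dec1' (binAlt hb) hc0
      have hp0 : p = 0 := by
        by_contra hp0
        have hrot := hlyn p (by omega) (by simp)
        have heq : (replicate p 1 ++ 0 :: replicate r 1).rotate p
            = (0 :: replicate r 1) ++ replicate p 1 := rotate_eq p rfl (by simp)
        have h2 : ((0:ℕ) :: replicate r 1) ++ replicate p 1 = 0 :: replicate (r+p) 1 := by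
          rw [replicate_add]; simp
        have hlt : (0:ℕ) :: replicate (r+p) 1 < replicate p 1 ++ 0 :: replicate r 1 := by
          simpa using lt_B (show (0:ℕ) < 1 by norm_num)
            (show 0 < p by omega) (replicate (r+p) 1) (0 :: replicate r 1)
        rw [heq, h2] at hrot
        exact absurd hrot hlt.asymm
      subst hp0
      simp only [replicate_zero, nil_append] at hl hc ⊢
      have : r = m - 1 := by simp at hl; omega
      simp [this]
    · intro hw
      simp only [Set.mem_singleton_iff] at hw
      subst hw
      refine ⟨by simp; omega, ?_, by simp [count_replicate], by simp, ?_⟩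
      · intro a ha
        simp only [mem_cons, mem_replicate] at ha
        rcases ha with rfl | ⟨_, rfl⟩ <;> omega
      · intro i hi0 hi
        simp only [length_cons, length_replicate] at hi
        have hw' : (0:ℕ) :: replicate (m-1) 1
            = (0 :: replicate (i-1) 1) ++ replicate (m-i) 1 := by
          simp only [cons_append, List.cons.injEq, true_and]
          rw [← replicate_add]
          congr 1
          omega
        have heq := rotate_eq i hw' (by simp; omega)
        rw [heq]
        simpa using lt_B (show (0:ℕ) < 1 by norm_num) (show 0 < m - i by omega)
          (replicate (m-1) 1) ((0 :: replicate (i-1) 1))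
  rw [L, hset, Set.ncard_singleton]


lemma N_two {n : ℕ} (hn : 3 ≤ n) : N n 2 = (n-2)/2 + 1 := by
  have hset : {w : List ℕ | w.length = n ∧ (∀ a ∈ w, a < 2) ∧ w.count 1 = 2 ∧ IsNecklace w}
      = ↑((Finset.range ((n-2)/2 + 1)).image
          (fun b => replicate (n-2-b) 0 ++ 1 :: (replicate b 0 ++ [1]))) := by
    ext w
    constructor
    · rintro ⟨hl, hb, hc, hneck⟩
      obtain ⟨a, b, c, rfl⟩ := dec2 (binAlt hb) hc
      have hlen : a + b + c + 2 = n := by simp at hl; omega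
      have hc0 : c = 0 := by
        by_contra hc0
        have hrot := hneck (a+b+2)
        have heq : (replicate a 0 ++ 1 :: (replicate b 0 ++ 1 :: replicate c 0)).rotate (a+b+2)
            = replicate c 0 ++ (replicate a 0 ++ 1 :: (replicate b 0 ++ [1])) :=
          rotate_eq (a+b+2) (by simp [append_assoc]) (by simp only [length_append, length_replicate, length_cons, length_singleton, length_nil]; omega)
        have h2 : replicate c (0:ℕ) ++ (replicate a 0 ++ 1 :: (replicate b 0 ++ [1]))
            = replicate (c+a) 0 ++ (1 :: (replicate b 0 ++ [1])) := by
          rw [replicate_add, append_assoc]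
        have hlt : replicate (c+a) (0:ℕ) ++ (1 :: (replicate b 0 ++ [1]))
            < replicate a 0 ++ 1 :: (replicate b 0 ++ 1 :: replicate c 0) :=
          lt_A (by norm_num) (by omega) _ _
        rw [heq, h2] at hrot
        exact absurd hrot (not_le_of_gt hlt)
      subst hc0
      have hba : b ≤ a := by
        by_contra hba
        have hrot := hneck (a+1)
        have heq : (replicate a 0 ++ 1 :: (replicate b 0 ++ 1 :: replicate 0 0)).rotate (a+1)
            = (replicate b 0 ++ [1]) ++ (replicate a 0 ++ [1]) :=
          rotate_eq (a+1) (by simp) (by simp)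
        have h2 : (replicate b (0:ℕ) ++ [1]) ++ (replicate a 0 ++ [1])
            = replicate b 0 ++ (1 :: (replicate a 0 ++ [1])) := by
          simp [append_assoc]
        have hlt : replicate b (0:ℕ) ++ (1 :: (replicate a 0 ++ [1]))
            < replicate a 0 ++ 1 :: (replicate b 0 ++ 1 :: replicate 0 0) :=
          lt_A (by norm_num) (by omega) _ _
        rw [heq, h2] at hrot
        exact absurd hrot (not_le_of_gt hlt)
      refine Finset.mem_coe.2 (Finset.mem_image.2 ⟨b, Finset.mem_range.2 (by omega), ?_⟩)
      have hab : n - 2 - b = a := by omega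
      rw [hab]
      simp
    · intro hw
      obtain ⟨b, hbmem, rfl⟩ := Finset.mem_image.1 (Finset.mem_coe.1 hw)
      have hbr : b ≤ (n-2)/2 := by
        have := Finset.mem_range.1 hbmem; omega
      have hba : b ≤ n - 2 - b := by omega
      refine ⟨by simp; omega, ?_, by simp [count_replicate], ?_⟩
      · intro x hx
        simp only [mem_append, mem_replicate, mem_cons, not_mem_nil, or_false] at hx
        rcases hx with ⟨_, rfl⟩ | rfl | ⟨_, rfl⟩ | rfl <;> omega
      · apply isNecklace_of_lt_length (by simp)
        intro i hi
        simp only [length_append, length_replicate, length_cons, length_singleton, length_nil] at hi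
        rcases Nat.eq_zero_or_pos i with rfl | hi0
        · simp
        rcases le_or_gt i (n-2-b) with hia | hia
        · -- rotation inside first zero block
          have hw' : replicate (n-2-b) (0:ℕ) ++ 1 :: (replicate b 0 ++ [1])
              = replicate i 0 ++ (replicate (n-2-b-i) 0 ++ 1 :: (replicate b 0 ++ [1])) := by
            rw [← append_assoc, ← replicate_add]
            congr 2
            omega
          have heq := rotate_eq i hw' (by simp)
          rw [heq]
          have h2 : (replicate (n-2-b-i) (0:ℕ) ++ 1 :: (replicate b 0 ++ [1])) ++ replicate i 0
              = replicate (n-2-b-i) 0 ++ 1 :: ((replicate b 0 ++ [1]) ++ replicate i 0) := by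
            simp [append_assoc]
          rw [h2]
          exact le_of_lt (lt_A (by norm_num) (by omega) _ _)
        · -- rotation hitting the second block
          obtain ⟨k, rfl⟩ : ∃ k, i = (n-2-b) + 1 + k := ⟨i - (n-2-b) - 1, by omega⟩
          have hkb : k ≤ b := by omega
          have hsplit : replicate b (0:ℕ) = replicate k 0 ++ replicate (b-k) 0 := by
            rw [← replicate_add]; congr 1; omega
          have hw' : replicate (n-2-b) (0:ℕ) ++ 1 :: (replicate b 0 ++ [1])
              = (replicate (n-2-b) 0 ++ 1 :: replicate k 0) ++ (replicate (b-k) 0 ++ [1]) := by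
            conv_lhs => rw [hsplit]
            simp only [cons_append, append_assoc]
          have heq := rotate_eq ((n-2-b)+1+k) hw' (by simp only [length_append, length_replicate, length_cons, length_singleton, length_nil]; omega)
          rw [heq]
          have h2 : (replicate (b-k) (0:ℕ) ++ [1]) ++ (replicate (n-2-b) 0 ++ 1 :: replicate k 0)
              = replicate (b-k) 0 ++ 1 :: (replicate (n-2-b) 0 ++ 1 :: replicate k 0) := by
            simp [append_assoc]
          rw [h2]
          by_cases hlt : b - k < n - 2 - b
          · exact le_of_lt (lt_A (by norm_num) hlt _ _)
          · have hk0 : k = 0 := by omega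
            have hbb : b = n - 2 - b := by omega
            subst hk0
            rw [← hbb]
            simp
  rw [N, hset, Set.ncard_coe_finset]
  rw [Finset.card_image_of_injOn, Finset.card_range]
  intro x hx y hy heq
  obtain ⟨h1, h2⟩ := rep_cons_inj (show (0:ℕ) ≠ 1 by norm_num) heq
  have hx' := Finset.mem_range.1 hx
  have hy' := Finset.mem_range.1 hy
  omega

lemma L_two {m : ℕ} (hm : 2 ≤ m) : L m 2 = (m-1)/2 := by
  have hset : {w : List ℕ | w.length = m ∧ (∀ a ∈ w, a < 2) ∧ w.count 1 = 2 ∧ IsLyndon w}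
      = ↑((Finset.range ((m-1)/2)).image
          (fun b => replicate (m-2-b) 0 ++ 1 :: (replicate b 0 ++ [1]))) := by
    ext w
    constructor
    · rintro ⟨hl, hb, hc, hne, hlyn⟩
      obtain ⟨a, b, c, rfl⟩ := dec2 (binAlt hb) hc
      have hlen : a + b + c + 2 = m := by simp at hl; omega
      have hc0 : c = 0 := by
        by_contra hc0
        have hrot := hlyn (a+b+2) (by omega) (by simp only [length_append, length_replicate, length_cons, length_singleton, length_nil]; omega)
        have heq : (replicate a 0 ++ 1 :: (replicate b 0 ++ 1 :: replicate c 0)).rotate (a+b+2)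
            = replicate c 0 ++ (replicate a 0 ++ 1 :: (replicate b 0 ++ [1])) :=
          rotate_eq (a+b+2) (by simp [append_assoc]) (by simp only [length_append, length_replicate, length_cons, length_singleton, length_nil]; omega)
        have h2 : replicate c (0:ℕ) ++ (replicate a 0 ++ 1 :: (replicate b 0 ++ [1]))
            = replicate (c+a) 0 ++ (1 :: (replicate b 0 ++ [1])) := by
          rw [replicate_add, append_assoc]
        have hlt : replicate (c+a) (0:ℕ) ++ (1 :: (replicate b 0 ++ [1]))
            < replicate a 0 ++ 1 :: (replicate b 0 ++ 1 :: replicate c 0) :=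
          lt_A (by norm_num) (by omega) _ _
        rw [heq, h2] at hrot
        exact absurd hrot hlt.asymm
      subst hc0
      have hba : b < a := by
        rcases lt_or_ge b a with h | h
        · exact h
        exfalso
        have hrot := hlyn (a+1) (by omega) (by simp only [length_append, length_replicate, length_cons, length_singleton, length_nil]; omega)
        have heq : (replicate a 0 ++ 1 :: (replicate b 0 ++ 1 :: replicate 0 0)).rotate (a+1)
            = (replicate b 0 ++ [1]) ++ (replicate a 0 ++ [1]) :=
          rotate_eq (a+1) (by simp) (by simp)
        have h2 : (replicate b (0:ℕ) ++ [1]) ++ (replicate a 0 ++ [1])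
            = replicate b 0 ++ (1 :: (replicate a 0 ++ [1])) := by
          simp [append_assoc]
        rw [heq, h2] at hrot
        rcases lt_or_eq_of_le h with h' | h'
        · have hlt : replicate b (0:ℕ) ++ (1 :: (replicate a 0 ++ [1]))
              < replicate a 0 ++ 1 :: (replicate b 0 ++ 1 :: replicate 0 0) :=
            lt_A (by norm_num) (by omega) _ _
          exact absurd hrot hlt.asymm
        · have heq3 : replicate b (0:ℕ) ++ 1 :: (replicate a 0 ++ [1])
              = replicate a 0 ++ 1 :: (replicate b 0 ++ 1 :: replicate 0 0) := by
            rw [← h']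
            simp
          rw [heq3] at hrot
          exact lt_irrefl _ hrot
      refine Finset.mem_coe.2 (Finset.mem_image.2 ⟨b, Finset.mem_range.2 (by omega), ?_⟩)
      have hab : m - 2 - b = a := by omega
      rw [hab]
      simp
    · intro hw
      obtain ⟨b, hbmem, rfl⟩ := Finset.mem_image.1 (Finset.mem_coe.1 hw)
      have hbr : b < (m-1)/2 := Finset.mem_range.1 hbmem
      have hba : b < m - 2 - b := by omega
      refine ⟨by simp; omega, ?_, by simp [count_replicate], by simp, ?_⟩
      · intro x hx
        simp only [mem_append, mem_replicate, mem_cons, not_mem_nil, or_false] at hx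
        rcases hx with ⟨_, rfl⟩ | rfl | ⟨_, rfl⟩ | rfl <;> omega
      · intro i hi0 hi
        simp only [length_append, length_replicate, length_cons, length_singleton, length_nil] at hi
        rcases le_or_gt i (m-2-b) with hia | hia
        · have hw' : replicate (m-2-b) (0:ℕ) ++ 1 :: (replicate b 0 ++ [1])
              = replicate i 0 ++ (replicate (m-2-b-i) 0 ++ 1 :: (replicate b 0 ++ [1])) := by
            rw [← append_assoc, ← replicate_add]
            congr 2
            omega
          have heq := rotate_eq i hw' (by simp)
          rw [heq]
          have h2 : (replicate (m-2-b-i) (0:ℕ) ++ 1 :: (replicate b 0 ++ [1])) ++ replicate i 0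
              = replicate (m-2-b-i) 0 ++ 1 :: ((replicate b 0 ++ [1]) ++ replicate i 0) := by
            simp [append_assoc]
          rw [h2]
          exact lt_A (by norm_num) (by omega) _ _
        · obtain ⟨k, rfl⟩ : ∃ k, i = (m-2-b) + 1 + k := ⟨i - (m-2-b) - 1, by omega⟩
          have hkb : k ≤ b := by omega
          have hsplit : replicate b (0:ℕ) = replicate k 0 ++ replicate (b-k) 0 := by
            rw [← replicate_add]; congr 1; omega
          have hw' : replicate (m-2-b) (0:ℕ) ++ 1 :: (replicate b 0 ++ [1])
              = (replicate (m-2-b) 0 ++ 1 :: replicate k 0) ++ (replicate (b-k) 0 ++ [1]) := by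
            conv_lhs => rw [hsplit]
            simp only [cons_append, append_assoc]
          have heq := rotate_eq ((m-2-b)+1+k) hw' (by simp only [length_append, length_replicate, length_cons, length_singleton, length_nil]; omega)
          rw [heq]
          have h2 : (replicate (b-k) (0:ℕ) ++ [1]) ++ (replicate (m-2-b) 0 ++ 1 :: replicate k 0)
              = replicate (b-k) 0 ++ 1 :: (replicate (m-2-b) 0 ++ 1 :: replicate k 0) := by
            simp [append_assoc]
          rw [h2]
          exact lt_A (by norm_num) (by omega) _ _
  rw [L, hset, Set.ncard_coe_finset]
  rw [Finset.card_image_of_injOn, Finset.card_range]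
  intro x hx y hy heq
  obtain ⟨h1, h2⟩ := rep_cons_inj (show (0:ℕ) ≠ 1 by norm_num) heq
  have hx' := Finset.mem_range.1 hx
  have hy' := Finset.mem_range.1 hy
  omega


lemma N_twozero {n : ℕ} (hn : 3 ≤ n) : N n (n-2) = (n-2)/2 + 1 := by
  have hset : {w : List ℕ | w.length = n ∧ (∀ a ∈ w, a < 2) ∧ w.count 1 = n-2 ∧ IsNecklace w}
      = ↑((Finset.range ((n-2)/2 + 1)).image
          (fun a => 0 :: (replicate a 1 ++ 0 :: replicate (n-2-a) 1))) := by
    ext w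
    constructor
    · rintro ⟨hl, hb, hc, hneck⟩
      have hc0 : w.count 0 = 2 := by
        have := count01 (binAlt hb); omega
      obtain ⟨p, q, r, rfl⟩ := dec2' (binAlt hb) hc0
      have hlen : p + q + r + 2 = n := by simp at hl; omega
      have hp0 : p = 0 := by
        by_contra hp0
        have hrot := hneck p
        have heq : (replicate p 1 ++ 0 :: (replicate q 1 ++ 0 :: replicate r 1)).rotate p
            = (0 :: (replicate q 1 ++ 0 :: replicate r 1)) ++ replicate p 1 :=
          rotate_eq p rfl (by simp)
        have h2 : ((0:ℕ) :: (replicate q 1 ++ 0 :: replicate r 1)) ++ replicate p 1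
            = 0 :: (replicate q 1 ++ 0 :: replicate (r+p) 1) := by
          rw [replicate_add]
          simp [append_assoc]
        have hlt : (0:ℕ) :: (replicate q 1 ++ 0 :: replicate (r+p) 1)
            < replicate p 1 ++ 0 :: (replicate q 1 ++ 0 :: replicate r 1) := by
          simpa using lt_B (show (0:ℕ) < 1 by norm_num) (show 0 < p by omega)
            (replicate q 1 ++ 0 :: replicate (r+p) 1)
            (0 :: (replicate q 1 ++ 0 :: replicate r 1))
        rw [heq, h2] at hrot
        exact absurd hrot (not_le_of_gt hlt)
      subst hp0
      have hqr : q ≤ r := by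
        by_contra hqr
        have hrot := hneck (q+1)
        have heq : (replicate 0 1 ++ 0 :: (replicate q 1 ++ 0 :: replicate r 1)).rotate (q+1)
            = (0 :: replicate r 1) ++ (0 :: replicate q 1) :=
          rotate_eq (q+1) (by simp) (by simp)
        have h2 : ((0:ℕ) :: replicate r 1) ++ (0 :: replicate q 1)
            = 0 :: (replicate r 1 ++ 0 :: replicate q 1) := by
          simp
        have hlt : (0:ℕ) :: (replicate r 1 ++ 0 :: replicate q 1)
            < replicate 0 1 ++ 0 :: (replicate q 1 ++ 0 :: replicate r 1) := by
          simpa using cons_lt (a := 0) (lt_B (show (0:ℕ) < 1 by norm_num) (show r < q by omega)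
            (replicate q 1) (0 :: replicate r 1))
        rw [heq, h2] at hrot
        exact absurd hrot (not_le_of_gt hlt)
      refine Finset.mem_coe.2 (Finset.mem_image.2 ⟨q, Finset.mem_range.2 (by omega), ?_⟩)
      have hqr' : n - 2 - q = r := by omega
      rw [hqr']
      simp
    · intro hw
      obtain ⟨a, hamem, rfl⟩ := Finset.mem_image.1 (Finset.mem_coe.1 hw)
      have har : a ≤ (n-2)/2 := by
        have := Finset.mem_range.1 hamem; omega
      have hac : a ≤ n - 2 - a := by omega
      refine ⟨by simp; omega, ?_, by simp [count_replicate]; omega, ?_⟩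
      · intro x hx
        simp only [mem_cons, mem_append, mem_replicate, not_mem_nil, or_false] at hx
        rcases hx with rfl | ⟨_, rfl⟩ | rfl | ⟨_, rfl⟩ <;> omega
      · apply isNecklace_of_lt_length (by simp)
        intro i hi
        simp only [length_cons, length_append, length_replicate] at hi
        rcases Nat.eq_zero_or_pos i with rfl | hi0
        · simp
        rcases le_or_gt i a with hia | hia
        · -- rotation inside the first ones block
          have hsplit : replicate a (1:ℕ) = replicate (i-1) 1 ++ replicate (a-(i-1)) 1 := by
            rw [← replicate_add]; congr 1; omega
          have hw' : (0:ℕ) :: (replicate a 1 ++ 0 :: replicate (n-2-a) 1)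
              = (0 :: replicate (i-1) 1) ++ (replicate (a-(i-1)) 1 ++ 0 :: replicate (n-2-a) 1) := by
            conv_lhs => rw [hsplit]
            simp only [cons_append, append_assoc]
          have heq := rotate_eq i hw'
            (by simp only [length_cons, length_replicate]; omega)
          rw [heq]
          have h2 : (replicate (a-(i-1)) (1:ℕ) ++ 0 :: replicate (n-2-a) 1) ++ (0 :: replicate (i-1) 1)
              = replicate (a-(i-1)) 1 ++ 0 :: (replicate (n-2-a) 1 ++ 0 :: replicate (i-1) 1) := by
            simp only [cons_append, append_assoc]
          rw [h2]
          refine le_of_lt ?_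
          simpa using lt_B (show (0:ℕ) < 1 by norm_num) (show 0 < a - (i-1) by omega)
            (replicate a 1 ++ 0 :: replicate (n-2-a) 1)
            (0 :: (replicate (n-2-a) 1 ++ 0 :: replicate (i-1) 1))
        rcases eq_or_lt_of_le (show a + 1 ≤ i by omega) with hia' | hia'
        · -- rotation at the second zero
          have hw' : (0:ℕ) :: (replicate a 1 ++ 0 :: replicate (n-2-a) 1)
              = (0 :: replicate a 1) ++ (0 :: replicate (n-2-a) 1) := by
            simp
          have heq := rotate_eq i hw' (by simp; omega)
          rw [heq]
          have h2 : ((0:ℕ) :: replicate (n-2-a) 1) ++ (0 :: replicate a 1)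
              = 0 :: (replicate (n-2-a) 1 ++ 0 :: replicate a 1) := by
            simp
          rw [h2]
          rcases lt_or_eq_of_le hac with hlt | heq2
          · exact le_of_lt (cons_lt (lt_B (show (0:ℕ) < 1 by norm_num) hlt
              (replicate (n-2-a) 1) (0 :: replicate a 1)))
          · rw [← heq2]
        · -- rotation inside the second ones block
          obtain ⟨k, rfl⟩ : ∃ k, i = a + 2 + k := ⟨i - a - 2, by omega⟩
          have hk : k < n - 2 - a := by omega
          have hsplit : replicate (n-2-a) (1:ℕ) = replicate k 1 ++ replicate (n-2-a-k) 1 := by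
            rw [← replicate_add]; congr 1; omega
          have hw' : (0:ℕ) :: (replicate a 1 ++ 0 :: replicate (n-2-a) 1)
              = (0 :: (replicate a 1 ++ 0 :: replicate k 1)) ++ replicate (n-2-a-k) 1 := by
            conv_lhs => rw [hsplit]
            simp only [cons_append, append_assoc]
          have heq := rotate_eq (a+2+k) hw'
            (by simp only [length_cons, length_append, length_replicate]; omega)
          rw [heq]
          refine le_of_lt ?_
          simpa using lt_B (show (0:ℕ) < 1 by norm_num) (show 0 < n - 2 - a - k by omega)
            (replicate a 1 ++ 0 :: replicate (n-2-a) 1)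
            (0 :: (replicate a 1 ++ 0 :: replicate k 1))
  rw [N, hset, Set.ncard_coe_finset]
  rw [Finset.card_image_of_injOn, Finset.card_range]
  intro x hx y hy heq
  simp only [List.cons.injEq, true_and] at heq
  exact (rep_cons_inj (show (1:ℕ) ≠ 0 by norm_num) heq).1

lemma L_twozero {m : ℕ} (hm : 2 ≤ m) : L m (m-2) = (m-1)/2 := by
  have hset : {w : List ℕ | w.length = m ∧ (∀ a ∈ w, a < 2) ∧ w.count 1 = m-2 ∧ IsLyndon w}
      = ↑((Finset.range ((m-1)/2)).image
          (fun a => 0 :: (replicate a 1 ++ 0 :: replicate (m-2-a) 1))) := by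
    ext w
    constructor
    · rintro ⟨hl, hb, hc, hne, hlyn⟩
      have hc0 : w.count 0 = 2 := by
        have := count01 (binAlt hb); omega
      obtain ⟨p, q, r, rfl⟩ := dec2' (binAlt hb) hc0
      have hlen : p + q + r + 2 = m := by simp at hl; omega
      have hp0 : p = 0 := by
        by_contra hp0
        have hrot := hlyn p (by omega) (by simp)
        have heq : (replicate p 1 ++ 0 :: (replicate q 1 ++ 0 :: replicate r 1)).rotate p
            = (0 :: (replicate q 1 ++ 0 :: replicate r 1)) ++ replicate p 1 :=
          rotate_eq p rfl (by simp)
        have h2 : ((0:ℕ) :: (replicate q 1 ++ 0 :: replicate r 1)) ++ replicate p 1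
            = 0 :: (replicate q 1 ++ 0 :: replicate (r+p) 1) := by
          rw [replicate_add]
          simp [append_assoc]
        have hlt : (0:ℕ) :: (replicate q 1 ++ 0 :: replicate (r+p) 1)
            < replicate p 1 ++ 0 :: (replicate q 1 ++ 0 :: replicate r 1) := by
          simpa using lt_B (show (0:ℕ) < 1 by norm_num) (show 0 < p by omega)
            (replicate q 1 ++ 0 :: replicate (r+p) 1)
            (0 :: (replicate q 1 ++ 0 :: replicate r 1))
        rw [heq, h2] at hrot
        exact absurd hrot hlt.asymm
      subst hp0
      have hqr : q < r := by
        rcases lt_or_ge q r with h | h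
        · exact h
        exfalso
        have hrot := hlyn (q+1) (by omega)
          (by simp only [length_append, length_replicate, length_cons, length_nil]; omega)
        have heq : (replicate 0 1 ++ 0 :: (replicate q 1 ++ 0 :: replicate r 1)).rotate (q+1)
            = (0 :: replicate r 1) ++ (0 :: replicate q 1) :=
          rotate_eq (q+1) (by simp) (by simp)
        have h2 : ((0:ℕ) :: replicate r 1) ++ (0 :: replicate q 1)
            = 0 :: (replicate r 1 ++ 0 :: replicate q 1) := by
          simp
        rw [heq, h2] at hrot
        rcases lt_or_eq_of_le h with h' | h'
        · have hlt : (0:ℕ) :: (replicate r 1 ++ 0 :: replicate q 1)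
              < replicate 0 1 ++ 0 :: (replicate q 1 ++ 0 :: replicate r 1) := by
            simpa using cons_lt (a := 0) (lt_B (show (0:ℕ) < 1 by norm_num) h'
              (replicate q 1) (0 :: replicate r 1))
          exact absurd hrot hlt.asymm
        · have heq3 : (0:ℕ) :: (replicate r 1 ++ 0 :: replicate q 1)
              = replicate 0 1 ++ 0 :: (replicate q 1 ++ 0 :: replicate r 1) := by
            rw [h']
            simp
          rw [heq3] at hrot
          exact lt_irrefl _ hrot
      refine Finset.mem_coe.2 (Finset.mem_image.2 ⟨q, Finset.mem_range.2 (by omega), ?_⟩)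
      have hqr' : m - 2 - q = r := by omega
      rw [hqr']
      simp
    · intro hw
      obtain ⟨a, hamem, rfl⟩ := Finset.mem_image.1 (Finset.mem_coe.1 hw)
      have har : a < (m-1)/2 := Finset.mem_range.1 hamem
      have hac : a < m - 2 - a := by omega
      refine ⟨by simp; omega, ?_, by simp [count_replicate]; omega, by simp, ?_⟩
      · intro x hx
        simp only [mem_cons, mem_append, mem_replicate, not_mem_nil, or_false] at hx
        rcases hx with rfl | ⟨_, rfl⟩ | rfl | ⟨_, rfl⟩ <;> omega
      · intro i hi0 hi
        simp only [length_cons, length_append, length_replicate] at hi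
        rcases le_or_gt i a with hia | hia
        · have hsplit : replicate a (1:ℕ) = replicate (i-1) 1 ++ replicate (a-(i-1)) 1 := by
            rw [← replicate_add]; congr 1; omega
          have hw' : (0:ℕ) :: (replicate a 1 ++ 0 :: replicate (m-2-a) 1)
              = (0 :: replicate (i-1) 1) ++ (replicate (a-(i-1)) 1 ++ 0 :: replicate (m-2-a) 1) := by
            conv_lhs => rw [hsplit]
            simp only [cons_append, append_assoc]
          have heq := rotate_eq i hw'
            (by simp only [length_cons, length_replicate]; omega)
          rw [heq]
          have h2 : (replicate (a-(i-1)) (1:ℕ) ++ 0 :: replicate (m-2-a) 1) ++ (0 :: replicate (i-1) 1)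
              = replicate (a-(i-1)) 1 ++ 0 :: (replicate (m-2-a) 1 ++ 0 :: replicate (i-1) 1) := by
            simp only [cons_append, append_assoc]
          rw [h2]
          simpa using lt_B (show (0:ℕ) < 1 by norm_num) (show 0 < a - (i-1) by omega)
            (replicate a 1 ++ 0 :: replicate (m-2-a) 1)
            (0 :: (replicate (m-2-a) 1 ++ 0 :: replicate (i-1) 1))
        rcases eq_or_lt_of_le (show a + 1 ≤ i by omega) with hia' | hia'
        · have hw' : (0:ℕ) :: (replicate a 1 ++ 0 :: replicate (m-2-a) 1)
              = (0 :: replicate a 1) ++ (0 :: replicate (m-2-a) 1) := by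
            simp
          have heq := rotate_eq i hw' (by simp; omega)
          rw [heq]
          have h2 : ((0:ℕ) :: replicate (m-2-a) 1) ++ (0 :: replicate a 1)
              = 0 :: (replicate (m-2-a) 1 ++ 0 :: replicate a 1) := by
            simp
          rw [h2]
          exact cons_lt (lt_B (show (0:ℕ) < 1 by norm_num) hac
            (replicate (m-2-a) 1) (0 :: replicate a 1))
        · obtain ⟨k, rfl⟩ : ∃ k, i = a + 2 + k := ⟨i - a - 2, by omega⟩
          have hk : k < m - 2 - a := by omega
          have hsplit : replicate (m-2-a) (1:ℕ) = replicate k 1 ++ replicate (m-2-a-k) 1 := by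
            rw [← replicate_add]; congr 1; omega
          have hw' : (0:ℕ) :: (replicate a 1 ++ 0 :: replicate (m-2-a) 1)
              = (0 :: (replicate a 1 ++ 0 :: replicate k 1)) ++ replicate (m-2-a-k) 1 := by
            conv_lhs => rw [hsplit]
            simp only [cons_append, append_assoc]
          have heq := rotate_eq (a+2+k) hw'
            (by simp only [length_cons, length_append, length_replicate]; omega)
          rw [heq]
          simpa using lt_B (show (0:ℕ) < 1 by norm_num) (show 0 < m - 2 - a - k by omega)
            (replicate a 1 ++ 0 :: replicate (m-2-a) 1)
            (0 :: (replicate a 1 ++ 0 :: replicate k 1))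
  rw [L, hset, Set.ncard_coe_finset]
  rw [Finset.card_image_of_injOn, Finset.card_range]
  intro x hx y hy heq
  simp only [List.cons.injEq, true_and] at heq
  exact (rep_cons_inj (show (1:ℕ) ≠ 0 by norm_num) heq).1

end PascalAux

/-- Equality in the Pascal-like bound for densities `1, 2, n-2, n-1`. -/
theorem pascal_equality_extremal (n d : ℕ)
    (hd : d ∈ ({1, 2, n - 2, n - 1} : Set ℕ)) (hd0 : 0 < d) (hdn : d < n)
    (hne : (n, d) ≠ (2, 1)) :
    N n d = L (n - 1) d + L (n - 1) (d - 1) := by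
  simp only [Set.mem_insert_iff, Set.mem_singleton_iff] at hd
  rcases hd with rfl | rfl | rfl | rfl
  · -- d = 1
    have hn3 : 3 ≤ n := by
      rcases Nat.lt_or_ge n 3 with h | h
      · exfalso
        have : n = 2 := by omega
        exact hne (by simp [this])
      · exact h
    rw [PascalAux.N_one (by omega), PascalAux.L_one (by omega),
      show (1:ℕ) - 1 = 0 from rfl, PascalAux.L_zero (by omega)]
  · -- d = 2
    rw [PascalAux.N_two (by omega), PascalAux.L_two (by omega),
      show (2:ℕ) - 1 = 1 from rfl, PascalAux.L_one (by omega)]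
    omega
  · -- d = n - 2
    have hn3 : 3 ≤ n := by omega
    rw [PascalAux.N_twozero (by omega)]
    rw [show n - 2 = (n-1) - 1 from by omega] 
    rw [PascalAux.L_onezero (by omega)]
    rw [show (n-1) - 1 - 1 = (n-1) - 2 from by omega]
    rw [PascalAux.L_twozero (by omega)]
    omega
  · -- d = n - 1
    have hn3 : 3 ≤ n := by
      rcases Nat.lt_or_ge n 3 with h | h
      · exfalso
        have h2 : n = 2 := by omega
        exact hne (by simp [h2])
      · exact h
    rw [PascalAux.N_onezero (by omega), PascalAux.L_allones (by omega),
      PascalAux.L_onezero (by omega)]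
end
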